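/- arXiv:1602.05386 — 2 statements merged into one kernel-verified Lean document; each statement's English description precedes it below -/
import Mathlib

section
/- Let k ≥ 3 and t ≥ 5 be integers, and suppose all k-element subsets of a vertex set of size t(k−1)+1 are colored red or blue with no red copy of the k-uniform loose cycle C^k_t and no blue copy of C^k_3. Then there exist a red k-set e_1 and a blue k-set e_2 with e_1 ∩ e_2 ≠ ∅, and a red k-set f_1 and a blue k-set f_2 with f_1 ∩ f_2 ≠ ∅, such that (e_1 ∪ e_2) ∩ (f_1 ∪ f_2) = ∅. -/
open Finset

/-- The `i`-th edge (0-indexed) of a `k`-uniform loose path embedded via `f`. -/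
def pathEdge (k : ℕ) {V : Type} [DecidableEq V] (f : ℕ → V) (i : ℕ) : Finset V :=
  (Finset.range k).image fun j => f (i * (k - 1) + j)

/-- The `i`-th edge (0-indexed) of a `k`-uniform loose cycle of length `n` embedded via `f`. -/
def cycleEdge (k n : ℕ) {V : Type} [DecidableEq V] (f : ℕ → V) (i : ℕ) : Finset V :=
  (Finset.range k).image fun j => f ((i * (k - 1) + j) % (n * (k - 1)))

/-- There is a copy of the loose path `P^k_n` all of whose edges have color `b`. -/
def hasPath (k n : ℕ) {V : Type} [DecidableEq V] (col : Finset V → Bool) (b : Bool) : Prop :=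
  ∃ f : ℕ → V, Set.InjOn f (Set.Iio (n * (k - 1) + 1)) ∧
    ∀ i < n, col (pathEdge k f i) = b

/-- There is a copy of the loose cycle `C^k_n` all of whose edges have color `b`. -/
def hasCycle (k n : ℕ) {V : Type} [DecidableEq V] (col : Finset V → Bool) (b : Bool) : Prop :=
  ∃ f : ℕ → V, Set.InjOn f (Set.Iio (n * (k - 1))) ∧
    ∀ i < n, col (cycleEdge k n f i) = b

/-- Ramsey number `R(P^k_n, P^k_m)` (red = `true`, blue = `false`). -/
noncomputable def ramseyPP (k n m : ℕ) : ℕ :=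
  sInf {N | ∀ col : Finset (Fin N) → Bool, hasPath k n col true ∨ hasPath k m col false}

/-- Ramsey number `R(P^k_n, C^k_m)`. -/
noncomputable def ramseyPC (k n m : ℕ) : ℕ :=
  sInf {N | ∀ col : Finset (Fin N) → Bool, hasPath k n col true ∨ hasCycle k m col false}

/-- Ramsey number `R(C^k_n, P^k_m)`. -/
noncomputable def ramseyCP (k n m : ℕ) : ℕ :=
  sInf {N | ∀ col : Finset (Fin N) → Bool, hasCycle k n col true ∨ hasPath k m col false}

/-- Ramsey number `R(C^k_n, C^k_m)`. -/
noncomputable def ramseyCC (k n m : ℕ) : ℕ :=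
  sInf {N | ∀ col : Finset (Fin N) → Bool, hasCycle k n col true ∨ hasCycle k m col false}

lemma cyc {V : Type} [DecidableEq V] (col : Finset V → Bool) (b : Bool) {k n : ℕ}
    (hk : 2 ≤ k) (hn : 2 ≤ n) (c : ℕ → V) (I : ℕ → Finset V)
    (hIcard : ∀ i < n, (I i).card = k - 2)
    (hcinj : ∀ i < n, ∀ j < n, c i = c j → i = j)
    (hIdisj : ∀ i < n, ∀ j < n, i ≠ j → Disjoint (I i) (I j))
    (hcI : ∀ i < n, ∀ j < n, c i ∉ I j)
    (hcol : ∀ i < n, col ({c i} ∪ I i ∪ {c ((i+1) % n)}) = b) :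
    hasCycle k n col b := by
  have hk1 : 0 < k - 1 := by omega
  set f : ℕ → V := fun m => if m % (k-1) = 0 then c (m / (k-1))
      else (I (m / (k-1))).toList.getD (m % (k-1) - 1) (c 0) with hf
  have hfval : ∀ i r, r < k-1 → f (i*(k-1)+r) =
      if r = 0 then c i else (I i).toList.getD (r-1) (c 0) := by
    intro i r hr
    have h1 : (i*(k-1)+r) % (k-1) = r := by
      rw [show i*(k-1)+r = r + i*(k-1) by ring, Nat.add_mul_mod_self_right,
        Nat.mod_eq_of_lt hr]
    have h2 : (i*(k-1)+r) / (k-1) = i := by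
      rw [show i*(k-1)+r = r + i*(k-1) by ring, Nat.add_mul_div_right _ _ hk1,
        Nat.div_eq_of_lt hr, Nat.zero_add]
    simp only [hf, h1, h2]
  have hval0 : ∀ i, f (i*(k-1)) = c i := by
    intro i
    have := hfval i 0 hk1
    simpa using this
  have hmemI : ∀ i < n, ∀ r, 0 < r → r < k-1 → f (i*(k-1)+r) ∈ I i := by
    intro i hi r hr0 hr
    rw [hfval i r hr]
    have hlen : (I i).toList.length = k - 2 := by rw [Finset.length_toList, hIcard i hi]
    have hidx : r - 1 < (I i).toList.length := by omega
    rw [if_neg (by omega), List.getD_eq_getElem _ _ hidx]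
    have := List.getElem_mem hidx
    rwa [Finset.mem_toList] at this
  have hinj : Set.InjOn f (Set.Iio (n*(k-1))) := by
    intro m hm m' hm' heq
    simp only [Set.mem_Iio] at hm hm'
    have hdm : m = (m/(k-1))*(k-1) + m % (k-1) := by
      rw [Nat.mul_comm]; exact (Nat.div_add_mod m (k-1)).symm
    have hdm' : m' = (m'/(k-1))*(k-1) + m' % (k-1) := by
      rw [Nat.mul_comm]; exact (Nat.div_add_mod m' (k-1)).symm
    have hi : m/(k-1) < n := by
      rw [Nat.div_lt_iff_lt_mul hk1]; omega
    have hi' : m'/(k-1) < n := by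
      rw [Nat.div_lt_iff_lt_mul hk1]; omega
    have hr : m % (k-1) < k-1 := Nat.mod_lt _ hk1
    have hr' : m' % (k-1) < k-1 := Nat.mod_lt _ hk1
    rw [hdm, hdm'] at heq
    rw [hfval _ _ hr, hfval _ _ hr'] at heq
    have key : m/(k-1) = m'/(k-1) ∧ m % (k-1) = m' % (k-1) := by
      by_cases h0 : m % (k-1) = 0 <;> by_cases h0' : m' % (k-1) = 0
      · rw [if_pos h0, if_pos h0'] at heq
        exact ⟨hcinj _ hi _ hi' heq, by omega⟩
      · rw [if_pos h0, if_neg h0'] at heq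
        exfalso
        have hlen : (I (m'/(k-1))).toList.length = k - 2 := by
          rw [Finset.length_toList, hIcard _ hi']
        have hidx : m' % (k-1) - 1 < (I (m'/(k-1))).toList.length := by omega
        rw [List.getD_eq_getElem _ _ hidx] at heq
        have hmem := List.getElem_mem hidx
        rw [Finset.mem_toList] at hmem
        rw [← heq] at hmem
        exact hcI _ hi _ hi' hmem
      · rw [if_neg h0, if_pos h0'] at heq
        exfalso
        have hlen : (I (m/(k-1))).toList.length = k - 2 := by
          rw [Finset.length_toList, hIcard _ hi]
        have hidx : m % (k-1) - 1 < (I (m/(k-1))).toList.length := by omega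
        rw [List.getD_eq_getElem _ _ hidx] at heq
        have hmem := List.getElem_mem hidx
        rw [Finset.mem_toList] at hmem
        rw [heq] at hmem
        exact hcI _ hi' _ hi hmem
      · rw [if_neg h0, if_neg h0'] at heq
        have hlen : (I (m/(k-1))).toList.length = k - 2 := by
          rw [Finset.length_toList, hIcard _ hi]
        have hlen' : (I (m'/(k-1))).toList.length = k - 2 := by
          rw [Finset.length_toList, hIcard _ hi']
        have hidx : m % (k-1) - 1 < (I (m/(k-1))).toList.length := by omega
        have hidx' : m' % (k-1) - 1 < (I (m'/(k-1))).toList.length := by omega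
        by_cases hii : m/(k-1) = m'/(k-1)
        · rw [← hii] at heq
          have hidx2 : m' % (k-1) - 1 < (I (m/(k-1))).toList.length := by omega
          rw [List.getD_eq_getElem _ _ hidx, List.getD_eq_getElem _ _ hidx2] at heq
          have hnd : (I (m/(k-1))).toList.Nodup := Finset.nodup_toList _
          have := (List.Nodup.getElem_inj_iff hnd).mp heq
          exact ⟨hii, by omega⟩
        · exfalso
          rw [List.getD_eq_getElem _ _ hidx, List.getD_eq_getElem _ _ hidx'] at heq
          have hmem := List.getElem_mem hidx
          rw [Finset.mem_toList] at hmem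
          have hmem' := List.getElem_mem hidx'
          rw [Finset.mem_toList] at hmem'
          rw [heq] at hmem
          exact (Finset.disjoint_left.mp (hIdisj _ hi _ hi' hii)) hmem hmem'
    have hmul : (m/(k-1))*(k-1) = (m'/(k-1))*(k-1) := by rw [key.1]
    omega
  refine ⟨f, hinj, fun i hi => ?_⟩
  have hedge : cycleEdge k n f i = {c i} ∪ I i ∪ {c ((i+1) % n)} := by
    have hub : (i+1)*(k-1) ≤ n*(k-1) := Nat.mul_le_mul_right _ (by omega)
    have hub' : (i+1)*(k-1) = i*(k-1) + (k-1) := by ring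
    unfold cycleEdge
    ext a
    simp only [Finset.mem_image, Finset.mem_range, Finset.mem_union, Finset.mem_singleton]
    constructor
    · rintro ⟨j, hj, rfl⟩
      by_cases hj0 : j = 0
      · subst hj0
        rw [Nat.add_zero, Nat.mod_eq_of_lt (by omega), hval0]
        exact Or.inl (Or.inl rfl)
      by_cases hjk : j = k-1
      · subst hjk
        by_cases hin : i+1 < n
        · have hlt : i*(k-1)+(k-1) < n*(k-1) := by
            have : (i+2)*(k-1) ≤ n*(k-1) := Nat.mul_le_mul_right _ (by omega)
            have h2 : (i+2)*(k-1) = i*(k-1) + (k-1) + (k-1) := by ring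
            omega
          rw [Nat.mod_eq_of_lt hlt, ← hub', hval0, Nat.mod_eq_of_lt hin]
          exact Or.inr rfl
        · have hin' : i + 1 = n := by omega
          have : i*(k-1)+(k-1) = n*(k-1) := by rw [← hub', hin']
          rw [this, Nat.mod_self]
          have h0 : f 0 = c 0 := by
            have := hval0 0; simpa using this
          rw [h0, hin', Nat.mod_self]
          exact Or.inr rfl
      · have hjlt : j < k-1 := by omega
        have hlt : i*(k-1)+j < n*(k-1) := by omega
        rw [Nat.mod_eq_of_lt hlt]
        exact Or.inl (Or.inr (hmemI i hi j (by omega) hjlt))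
    · rintro ((rfl | ha) | rfl)
      · refine ⟨0, by omega, ?_⟩
        rw [Nat.add_zero, Nat.mod_eq_of_lt (by omega), hval0]
      · have ha' : a ∈ (I i).toList := Finset.mem_toList.mpr ha
        obtain ⟨idx, hidx, hget⟩ := List.getElem_of_mem ha'
        have hlen : (I i).toList.length = k - 2 := by
          rw [Finset.length_toList, hIcard i hi]
        refine ⟨idx+1, by omega, ?_⟩
        have hlt : i*(k-1)+(idx+1) < n*(k-1) := by omega
        rw [Nat.mod_eq_of_lt hlt, hfval i (idx+1) (by omega), if_neg (by omega),
          show idx+1-1 = idx from rfl,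
          List.getD_eq_getElem _ _ (by omega : idx < (I i).toList.length)]
        exact hget
      · refine ⟨k-1, by omega, ?_⟩
        by_cases hin : i+1 < n
        · have hlt : i*(k-1)+(k-1) < n*(k-1) := by
            have : (i+2)*(k-1) ≤ n*(k-1) := Nat.mul_le_mul_right _ (by omega)
            have h2 : (i+2)*(k-1) = i*(k-1) + (k-1) + (k-1) := by ring
            omega
          rw [Nat.mod_eq_of_lt hlt, ← hub', hval0, Nat.mod_eq_of_lt hin]
        · have hin' : i + 1 = n := by omega
          have : i*(k-1)+(k-1) = n*(k-1) := by rw [← hub', hin']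
          rw [this, Nat.mod_self]
          have h0 : f 0 = c 0 := by
            have := hval0 0; simpa using this
          rw [h0, hin', Nat.mod_self]
  rw [hedge]
  exact hcol i hi

lemma card_edge3 {V : Type} [DecidableEq V] {a b' : V} {I : Finset V} {k : ℕ} (hk : 2 ≤ k)
    (ha : a ∉ I) (hb : b' ∉ I) (hab : a ≠ b') (hI : I.card = k-2) :
    ({a} ∪ I ∪ {b'}).card = k := by
  have h1 : ({a} ∪ I ∪ {b'} : Finset V) = insert a (insert b' I) := by
    ext x; simp [Finset.mem_insert, Finset.mem_union]
  rw [h1, Finset.card_insert_of_notMem (by simp [ha, hab]),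
    Finset.card_insert_of_notMem hb, hI]
  omega

lemma card_cycleEdge {V : Type} [DecidableEq V] {k n : ℕ} (hk : 1 ≤ k) (hkn : k ≤ n*(k-1))
    {f : ℕ → V} (hf : Set.InjOn f (Set.Iio (n*(k-1)))) (i : ℕ) :
    (cycleEdge k n f i).card = k := by
  have hpos : 0 < n*(k-1) := by omega
  rw [cycleEdge, Finset.card_image_of_injOn, Finset.card_range]
  intro j hj j' hj' heq
  simp only [Finset.coe_range, Set.mem_Iio] at hj hj'
  have h1 : (i*(k-1)+j) % (n*(k-1)) < n*(k-1) := Nat.mod_lt _ hpos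
  have h2 : (i*(k-1)+j') % (n*(k-1)) < n*(k-1) := Nat.mod_lt _ hpos
  have h3 := hf (Set.mem_Iio.mpr h1) (Set.mem_Iio.mpr h2) heq
  have h4 : j ≡ j' [MOD n*(k-1)] := by
    have : i*(k-1)+j ≡ i*(k-1)+j' [MOD n*(k-1)] := by
      unfold Nat.ModEq; omega
    exact Nat.ModEq.add_left_cancel' _ this
  have := h4.eq_of_lt_of_lt (by omega) (by omega)
  exact this

lemma red1 {V : Type} [DecidableEq V] {col : Finset V → Bool} {k : ℕ}
    (Hno2 : ¬ ∃ e f : Finset V, e.card = k ∧ f.card = k ∧ col e = false ∧ col f = false ∧ e ∩ f = ∅)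
    {β : Finset V} (hβk : β.card = k) (hβ : col β = false)
    {e : Finset V} (he : e.card = k) (hd : e ∩ β = ∅) : col e = true := by
  cases h : col e
  · exact absurd ⟨e, β, he, hβk, h, hβ, hd⟩ Hno2
  · rfl

lemma pair_core {V : Type} [DecidableEq V] {col : Finset V → Bool} {k : ℕ} (hk : 3 ≤ k)
    (hnoblue : ¬ hasCycle k 3 col false)
    {β S T : Finset V} {x y z : V}
    (hβk : β.card = k) (hβ : col β = false)
    (hx : x ∈ β) (hy : y ∈ β) (hxy : x ≠ y)
    (hS : S.card = k-2) (hT : T.card = k-2)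
    (hSβ : Disjoint S β) (hTβ : Disjoint T β) (hST : Disjoint S T)
    (hz : z ∉ β) (hzS : z ∉ S) (hzT : z ∉ T) :
    col (insert y (S ∪ {z})) = true ∨ col (insert x (T ∪ {z})) = true := by
  by_contra h
  push_neg at h
  obtain ⟨h1, h2⟩ := h
  simp only [Bool.not_eq_true] at h1 h2
  apply hnoblue
  have hxz : x ≠ z := fun h => hz (h ▸ hx)
  have hyz : y ≠ z := fun h => hz (h ▸ hy)
  have hEβ : (β.erase x).erase y ⊆ β := (Finset.erase_subset _ _).trans (Finset.erase_subset _ _)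
  have dES : Disjoint ((β.erase x).erase y) S := Finset.disjoint_of_subset_left hEβ hSβ.symm
  have dET : Disjoint ((β.erase x).erase y) T := Finset.disjoint_of_subset_left hEβ hTβ.symm
  have hxS : x ∉ S := Finset.disjoint_right.mp hSβ hx
  have hxT : x ∉ T := Finset.disjoint_right.mp hTβ hx
  have hyS : y ∉ S := Finset.disjoint_right.mp hSβ hy
  have hyT : y ∉ T := Finset.disjoint_right.mp hTβ hy
  have hxE : x ∉ (β.erase x).erase y := by simp
  have hyE : y ∉ (β.erase x).erase y := by simp
  have hzE : z ∉ (β.erase x).erase y := fun h => hz (hEβ h)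
  apply cyc col false (by omega : 2 ≤ k) (by omega : 2 ≤ 3)
    (fun i => [x, y, z].getD i x)
    (fun i => [(β.erase x).erase y, S, T].getD i S)
  · intro i hi
    interval_cases i
    · show ((β.erase x).erase y).card = k - 2
      rw [Finset.card_erase_of_mem (Finset.mem_erase.mpr ⟨Ne.symm hxy, hy⟩),
        Finset.card_erase_of_mem hx, hβk]
      omega
    · exact hS
    · exact hT
  · intro i hi j hj
    interval_cases i <;> interval_cases j
    · exact fun _ => rfl
    · exact fun h => absurd h hxy
    · exact fun h => absurd h hxz
    · exact fun h => absurd h.symm hxy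
    · exact fun _ => rfl
    · exact fun h => absurd h hyz
    · exact fun h => absurd h.symm hxz
    · exact fun h => absurd h.symm hyz
    · exact fun _ => rfl
  · intro i hi j hj hij
    interval_cases i <;> interval_cases j
    · exact absurd rfl hij
    · exact dES
    · exact dET
    · exact dES.symm
    · exact absurd rfl hij
    · exact hST
    · exact dET.symm
    · exact hST.symm
    · exact absurd rfl hij
  · intro i hi j hj
    interval_cases i <;> interval_cases j
    · exact hxE
    · exact hxS
    · exact hxT
    · exact hyE
    · exact hyS
    · exact hyT
    · exact hzE
    · exact hzS
    · exact hzT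
  · intro i hi
    have he0 : ({x} ∪ (β.erase x).erase y ∪ {y} : Finset V) = β := by
      ext a
      simp only [Finset.mem_union, Finset.mem_singleton, Finset.mem_erase]
      constructor
      · rintro ((rfl | ⟨h1', h2', h3'⟩) | rfl)
        · exact hx
        · exact h3'
        · exact hy
      · intro ha
        by_cases ha1 : a = x
        · exact Or.inl (Or.inl ha1)
        by_cases ha2 : a = y
        · exact Or.inr ha2
        · exact Or.inl (Or.inr ⟨ha2, ha1, ha⟩)
    have he1 : ({y} ∪ S ∪ {z} : Finset V) = insert y (S ∪ {z}) := by
      ext a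
      simp only [Finset.mem_union, Finset.mem_singleton, Finset.mem_insert]
      tauto
    have he2 : ({z} ∪ T ∪ {x} : Finset V) = insert x (T ∪ {z}) := by
      ext a
      simp only [Finset.mem_union, Finset.mem_singleton, Finset.mem_insert]
      tauto
    interval_cases i
    · show col ({x} ∪ (β.erase x).erase y ∪ {y}) = false
      rw [he0]; exact hβ
    · show col ({y} ∪ S ∪ {z}) = false
      rw [he1]; exact h1
    · show col ({z} ∪ T ∪ {x}) = false
      rw [he2]; exact h2

lemma triv {V : Type} [DecidableEq V] [Fintype V] (col : Finset V → Bool) {k n : ℕ}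
    (hk : 2 ≤ k) (hn : 2 ≤ n) (hsize : n*(k-1) ≤ Fintype.card V)
    (hall : ∀ e : Finset V, e.card = k → col e = true) : hasCycle k n col true := by
  obtain ⟨W, -, hWcard⟩ := Finset.exists_subset_card_eq (s := (Finset.univ : Finset V)) (n := n*(k-1))
    (by simpa using hsize)
  have hpos : 0 < n*(k-1) := by
    have : 1*(k-1) ≤ n*(k-1) := Nat.mul_le_mul_right _ (by omega)
    omega
  obtain ⟨d, -⟩ := Finset.card_pos.mp (by omega : 0 < W.card)
  set f : ℕ → V := fun m => W.toList.getD (m % (n*(k-1))) d with hf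
  have hlen : W.toList.length = n*(k-1) := by rw [Finset.length_toList, hWcard]
  have hinj : Set.InjOn f (Set.Iio (n*(k-1))) := by
    intro m hm m' hm' heq
    simp only [Set.mem_Iio] at hm hm'
    simp only [hf, Nat.mod_eq_of_lt hm, Nat.mod_eq_of_lt hm'] at heq
    rw [List.getD_eq_getElem _ _ (by omega), List.getD_eq_getElem _ _ (by omega)] at heq
    exact (List.Nodup.getElem_inj_iff (Finset.nodup_toList W)).mp heq
  refine ⟨f, hinj, fun i hi => ?_⟩
  exact hall _ (card_cycleEdge (by omega)
    (by have := Nat.mul_le_mul_right (k-1) hn; omega) hinj i)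

lemma pairL {V : Type} [DecidableEq V] {col : Finset V → Bool} {k : ℕ} (hk : 3 ≤ k)
    (hnoblue : ¬ hasCycle k 3 col false)
    {β R : Finset V} (hβk : β.card = k) (hβ : col β = false)
    (hRβ : Disjoint R β) (hRcard : 2*k-3 ≤ R.card) :
    ∃ r : Finset V, r.card = k ∧ col r = true ∧ (r ∩ β).Nonempty ∧ r ⊆ R ∪ β := by
  obtain ⟨x, hx, y, hy, hxy⟩ := Finset.one_lt_card.mp (by omega : 1 < β.card)
  obtain ⟨S, hSR, hScard⟩ := Finset.exists_subset_card_eq (s := R) (n := k-2) (by omega)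
  obtain ⟨T, hTR, hTcard⟩ := Finset.exists_subset_card_eq (s := R \ S) (n := k-2)
    (by rw [Finset.card_sdiff_of_subset hSR]; omega)
  have hTS : Disjoint T S := Finset.disjoint_of_subset_left hTR (Finset.sdiff_disjoint)
  have hTR' : T ⊆ R := hTR.trans (Finset.sdiff_subset)
  have : 0 < ((R \ S) \ T).card := by
    rw [Finset.card_sdiff_of_subset hTR, Finset.card_sdiff_of_subset hSR]; omega
  obtain ⟨z, hz⟩ := Finset.card_pos.mp this
  have hzR : z ∈ R := (Finset.sdiff_subset) ((Finset.sdiff_subset) hz)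
  have hzS : z ∉ S := by
    have := (Finset.mem_sdiff.mp ((Finset.sdiff_subset) hz)).2
    exact this
  have hzT : z ∉ T := (Finset.mem_sdiff.mp hz).2
  have hzβ : z ∉ β := Finset.disjoint_left.mp hRβ hzR
  have hSβ : Disjoint S β := Finset.disjoint_of_subset_left hSR hRβ
  have hTβ : Disjoint T β := Finset.disjoint_of_subset_left hTR' hRβ
  have hcore := pair_core hk hnoblue hβk hβ hx hy hxy hScard hTcard hSβ hTβ hTS.symm hzβ hzS hzT
  rcases hcore with hred | hred
  · refine ⟨insert y (S ∪ {z}), ?_, hred, ⟨y, ?_⟩, ?_⟩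
    · rw [Finset.card_insert_of_notMem, Finset.card_union_of_disjoint, hScard,
        Finset.card_singleton]
      · omega
      · simpa using hzS
      · simp only [Finset.mem_union, Finset.mem_singleton]
        push_neg
        exact ⟨Finset.disjoint_right.mp hSβ hy, fun h => hzβ (h ▸ hy)⟩
    · exact Finset.mem_inter.mpr ⟨Finset.mem_insert_self _ _, hy⟩
    · intro a ha
      simp only [Finset.mem_insert, Finset.mem_union, Finset.mem_singleton] at ha
      rcases ha with rfl | ha | rfl
      · exact Finset.mem_union_right _ hy
      · exact Finset.mem_union_left _ (hSR ha)
      · exact Finset.mem_union_left _ hzR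
  · refine ⟨insert x (T ∪ {z}), ?_, hred, ⟨x, ?_⟩, ?_⟩
    · rw [Finset.card_insert_of_notMem, Finset.card_union_of_disjoint, hTcard,
        Finset.card_singleton]
      · omega
      · simpa using hzT
      · simp only [Finset.mem_union, Finset.mem_singleton]
        push_neg
        exact ⟨Finset.disjoint_right.mp hTβ hx, fun h => hzβ (h ▸ hx)⟩
    · exact Finset.mem_inter.mpr ⟨Finset.mem_insert_self _ _, hx⟩
    · intro a ha
      simp only [Finset.mem_insert, Finset.mem_union, Finset.mem_singleton] at ha
      rcases ha with rfl | ha | rfl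
      · exact Finset.mem_union_right _ hx
      · exact Finset.mem_union_left _ (hTR' ha)
      · exact Finset.mem_union_left _ hzR

lemma star_aux {k t : ℕ} (hk : 3 ≤ k) (ht : 5 ≤ t) {V : Type} [DecidableEq V] [Fintype V]
    (hcard : Fintype.card V = t*(k-1)+1) {col : Finset V → Bool}
    (hnored : ¬ hasCycle k t col true)
    (Hno2 : ¬ ∃ e f : Finset V, e.card = k ∧ f.card = k ∧ col e = false ∧ col f = false ∧ e ∩ f = ∅)
    {β : Finset V} (hβk : β.card = k) (hβ : col β = false)
    {u v c : V} (hu : u ∉ β) (hv : v ∉ β) (huv : u ≠ v) (hc : c ∈ β)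
    {S0 : Finset V} (hS0card : S0.card = k-2) (hS0β : Disjoint S0 β)
    (hS0u : u ∉ S0) (hS0v : v ∉ S0)
    (hred : col (insert c (S0 ∪ {u})) = true) :
    ∀ M ⊆ β.erase c, M.card = k-2 → col (insert u (insert v M)) = false := by
  intro M hM hMcard
  by_contra hMc
  rw [Bool.not_eq_false] at hMc
  apply hnored
  -- basic facts
  obtain ⟨κ, hκ⟩ := Finset.card_pos.mp (by omega : 0 < S0.card)
  have hκβ : κ ∉ β := Finset.disjoint_left.mp hS0β hκ
  have hκu : κ ≠ u := fun h => hS0u (h ▸ hκ)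
  have hκv : κ ≠ v := fun h => hS0v (h ▸ hκ)
  have hcu : c ≠ u := fun h => hu (h ▸ hc)
  have hcv : c ≠ v := fun h => hv (h ▸ hc)
  have hcκ : c ≠ κ := fun h => hκβ (h ▸ hc)
  have hMβ : M ⊆ β := hM.trans (Finset.erase_subset _ _)
  have hMc' : c ∉ M := fun h => (Finset.mem_erase.mp (hM h)).1 rfl
  have hMu : u ∉ M := fun h => hu (hMβ h)
  have hMv : v ∉ M := fun h => hv (hMβ h)
  -- the reservoir
  set Rest : Finset V := ((Finset.univ \ β) \ S0) \ {u, v} with hRest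
  have hsub1 : S0 ⊆ Finset.univ \ β := fun a ha =>
    Finset.mem_sdiff.mpr ⟨Finset.mem_univ a, Finset.disjoint_left.mp hS0β ha⟩
  have hsub2 : ({u, v} : Finset V) ⊆ (Finset.univ \ β) \ S0 := by
    intro a ha
    rcases Finset.mem_insert.mp ha with rfl | ha
    · exact Finset.mem_sdiff.mpr ⟨Finset.mem_sdiff.mpr ⟨Finset.mem_univ _, hu⟩, hS0u⟩
    · rw [Finset.mem_singleton] at ha
      subst ha
      exact Finset.mem_sdiff.mpr ⟨Finset.mem_sdiff.mpr ⟨Finset.mem_univ _, hv⟩, hS0v⟩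
  have hmul1 : 5*(k-1) ≤ t*(k-1) := Nat.mul_le_mul_right _ ht
  have hmul2 : (t-2)*(k-1) = t*(k-1) - 2*(k-1) := by
    rw [Nat.sub_mul]
  have hRestcard : Rest.card = (t-2)*(k-1) - 1 := by
    rw [hRest, Finset.card_sdiff_of_subset hsub2, Finset.card_sdiff_of_subset hsub1, Finset.card_sdiff_of_subset
      (Finset.subset_univ β)]
    rw [Finset.card_univ, hcard, hβk, hS0card,
      Finset.card_insert_of_notMem (by simpa using huv), Finset.card_singleton]
    omega
  set L := Rest.card with hLdef
  have hL2 : t-3 ≤ L ∧ (t-2)*(k-2) + (t-3) = L := by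
    have h4 : (t-2)*(k-1) = (t-2)*(k-2) + (t-2) := by
      have hk2 : k-1 = (k-2)+1 := by omega
      rw [hk2, Nat.mul_succ]
    have h5 : 2*(k-2) ≤ (t-2)*(k-2) := Nat.mul_le_mul_right _ (by omega)
    constructor <;> omega
  set ρ := Rest.toList with hρ
  have hρlen : ρ.length = L := Finset.length_toList _
  set getR : ℕ → V := fun idx => ρ.getD idx u with hgetR
  have hgetmem : ∀ idx, idx < L → getR idx ∈ Rest := by
    intro idx hidx
    rw [hgetR]
    simp only
    rw [List.getD_eq_getElem _ _ (by omega)]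
    exact Finset.mem_toList.mp (List.getElem_mem _)
  have hgetinj : ∀ idx, idx < L → ∀ idx', idx' < L → getR idx = getR idx' → idx = idx' := by
    intro idx hidx idx' hidx' heq
    rw [hgetR] at heq
    simp only at heq
    rw [List.getD_eq_getElem _ _ (by omega), List.getD_eq_getElem _ _ (by omega)] at heq
    exact (List.Nodup.getElem_inj_iff (Finset.nodup_toList _)).mp heq
  have hRfact : ∀ a ∈ Rest, a ∉ β ∧ a ∉ S0 ∧ a ≠ u ∧ a ≠ v := by
    intro a ha
    rw [hRest] at ha
    simp only [Finset.mem_sdiff, Finset.mem_univ, true_and, Finset.mem_insert,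
      Finset.mem_singleton] at ha
    exact ⟨ha.1.1, ha.1.2, fun h => ha.2 (Or.inl h), fun h => ha.2 (Or.inr h)⟩
  have huR : ∀ idx, idx < L → u ≠ getR idx := fun idx h hh =>
    ((hRfact _ (hgetmem idx h)).2.2.1) hh.symm
  have hvR : ∀ idx, idx < L → v ≠ getR idx := fun idx h hh =>
    ((hRfact _ (hgetmem idx h)).2.2.2) hh.symm
  have hκR : ∀ idx, idx < L → κ ≠ getR idx := fun idx h hh =>
    ((hRfact _ (hgetmem idx h)).2.1) (hh ▸ hκ)
  have hcR : ∀ idx, idx < L → c ≠ getR idx := fun idx h hh =>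
    ((hRfact _ (hgetmem idx h)).1) (hh ▸ hc)
  -- the embedding data
  set cf : ℕ → V := fun i => if i = 0 then u else if i = 1 then κ else
    if i = t-1 then v else getR (i-2) with hcf
  set If : ℕ → Finset V := fun i => if i = 0 then insert c (S0.erase κ) else
    if i = t-1 then M else (Finset.range (k-2)).image (fun j => getR ((t-3) + (i-1)*(k-2) + j))
    with hIf
  have hcval0 : cf 0 = u := by simp [hcf]
  have hcval1 : cf 1 = κ := by simp [hcf]
  have hcvalL : cf (t-1) = v := by
    have e0 : ¬ (t-1 = 0) := by omega
    have e1 : ¬ (t-1 = 1) := by omega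
    simp [hcf, e0, e1]
  have hcvalM : ∀ i, 2 ≤ i → i ≤ t-2 → cf i = getR (i-2) := by
    intro i h1 h2
    have e0 : ¬ (i = 0) := by omega
    have e1 : ¬ (i = 1) := by omega
    have e2 : ¬ (i = t-1) := by omega
    simp [hcf, e0, e1, e2]
  have hIval0 : If 0 = insert c (S0.erase κ) := by simp [hIf]
  have hIvalL : If (t-1) = M := by
    have e0 : ¬ (t-1 = 0) := by omega
    simp [hIf, e0]
  have hIvalM : ∀ i, 1 ≤ i → i ≤ t-2 →
      If i = (Finset.range (k-2)).image (fun j => getR ((t-3) + (i-1)*(k-2) + j)) := by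
    intro i h1 h2
    have e0 : ¬ (i = 0) := by omega
    have e1 : ¬ (i = t-1) := by omega
    simp [hIf, e0, e1]
  -- index arithmetic
  have hidxlt : ∀ i j, 1 ≤ i → i ≤ t-2 → j < k-2 → (t-3) + (i-1)*(k-2) + j < L := by
    intro i j h1 h2 hj
    have hA : (i-1)*(k-2) ≤ (t-3)*(k-2) := Nat.mul_le_mul_right _ (by omega)
    have hB : (t-2)*(k-2) = (t-3)*(k-2) + (k-2) := by
      have h3 : t-2 = (t-3)+1 := by omega
      rw [h3, Nat.succ_mul]
    omega
  have hdiv : ∀ a b : ℕ, b < k-2 → (a*(k-2)+b)/(k-2) = a := by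
    intro a b hb
    rw [show a*(k-2)+b = b + a*(k-2) by ring, Nat.add_mul_div_right _ _ (by omega : 0 < k-2),
      Nat.div_eq_of_lt hb]
    omega
  have hidxinj : ∀ i j i' j', 1 ≤ i → i ≤ t-2 → 1 ≤ i' → i' ≤ t-2 → j < k-2 → j' < k-2 →
      (t-3) + (i-1)*(k-2) + j = (t-3) + (i'-1)*(k-2) + j' → i = i' ∧ j = j' := by
    intro i j i' j' h1 h2 h1' h2' hj hj' heq
    have e1 : (i-1)*(k-2)+j = (i'-1)*(k-2)+j' := by omega
    have e2 : i - 1 = i' - 1 := by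
      rw [← hdiv (i-1) j hj, ← hdiv (i'-1) j' hj', e1]
    have e3 : (i-1)*(k-2) = (i'-1)*(k-2) := by rw [e2]
    constructor <;> omega
  -- the four structural obligations
  have hIcard' : ∀ i < t, (If i).card = k-2 := by
    intro i hi
    rcases (by omega : i = 0 ∨ i = t-1 ∨ (1 ≤ i ∧ i ≤ t-2)) with rfl | hE | ⟨h1, h2⟩
    · rw [hIval0, Finset.card_insert_of_notMem
        (fun h => Finset.disjoint_left.mp hS0β (Finset.erase_subset _ _ h) hc),
        Finset.card_erase_of_mem hκ, hS0card]
      omega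
    · rw [hE, hIvalL]; exact hMcard
    · rw [hIvalM i h1 h2, Finset.card_image_of_injOn, Finset.card_range]
      intro a ha b hb heq
      simp only [Finset.coe_range, Set.mem_Iio] at ha hb
      have := hgetinj _ (hidxlt i a h1 h2 ha) _ (hidxlt i b h1 h2 hb) heq
      omega
  have hmidsub : ∀ i, 1 ≤ i → i ≤ t-2 → If i ⊆ Rest := by
    intro i h1 h2 a ha
    rw [hIvalM i h1 h2] at ha
    obtain ⟨j, hj, rfl⟩ := Finset.mem_image.mp ha
    rw [Finset.mem_range] at hj
    exact hgetmem _ (hidxlt i j h1 h2 hj)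
  have hI0mem : ∀ a ∈ If 0, a = c ∨ a ∈ S0 := by
    intro a ha
    rw [hIval0] at ha
    rcases Finset.mem_insert.mp ha with rfl | ha
    · exact Or.inl rfl
    · exact Or.inr (Finset.erase_subset _ _ ha)
  have hcinj' : ∀ i < t, ∀ j < t, cf i = cf j → i = j := by
    intro i hi j hj heq
    rcases (by omega : i = 0 ∨ i = 1 ∨ i = t-1 ∨ (2 ≤ i ∧ i ≤ t-2)) with rfl | rfl | hE | hMi <;>
      rcases (by omega : j = 0 ∨ j = 1 ∨ j = t-1 ∨ (2 ≤ j ∧ j ≤ t-2)) with rfl | rfl | hE' | hMj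
    · rfl
    · rw [hcval0, hcval1] at heq; exact absurd heq.symm hκu
    · rw [hcval0, hE', hcvalL] at heq; exact absurd heq huv
    · rw [hcval0, hcvalM j hMj.1 hMj.2] at heq
      exact absurd heq (huR _ (by omega))
    · rw [hcval1, hcval0] at heq; exact absurd heq hκu
    · rfl
    · rw [hcval1, hE', hcvalL] at heq; exact absurd heq hκv
    · rw [hcval1, hcvalM j hMj.1 hMj.2] at heq
      exact absurd heq (hκR _ (by omega))
    · rw [hE, hcvalL, hcval0] at heq; exact absurd heq.symm huv
    · rw [hE, hcvalL, hcval1] at heq; exact absurd heq.symm hκv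
    · omega
    · rw [hE, hcvalL, hcvalM j hMj.1 hMj.2] at heq
      exact absurd heq (hvR _ (by omega))
    · rw [hcvalM i hMi.1 hMi.2, hcval0] at heq
      exact absurd heq.symm (huR _ (by omega))
    · rw [hcvalM i hMi.1 hMi.2, hcval1] at heq
      exact absurd heq.symm (hκR _ (by omega))
    · rw [hcvalM i hMi.1 hMi.2, hE', hcvalL] at heq
      exact absurd heq.symm (hvR _ (by omega))
    · rw [hcvalM i hMi.1 hMi.2, hcvalM j hMj.1 hMj.2] at heq
      have := hgetinj _ (by omega) _ (by omega) heq
      omega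
  have hIdisj' : ∀ i < t, ∀ j < t, i ≠ j → Disjoint (If i) (If j) := by
    have key : ∀ i < t, ∀ j < t, i < j → Disjoint (If i) (If j) := by
      intro i hi j hj hij
      rw [Finset.disjoint_left]
      intro a hai haj
      rcases (by omega : i = 0 ∨ i = t-1 ∨ (1 ≤ i ∧ i ≤ t-2)) with rfl | hE | hMi <;>
        rcases (by omega : j = 0 ∨ j = t-1 ∨ (1 ≤ j ∧ j ≤ t-2)) with rfl | hE' | hMj
      · omega
      · -- I0 vs M
        rw [hE', hIvalL] at haj
        rcases hI0mem a hai with rfl | ha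
        · exact hMc' haj
        · exact Finset.disjoint_left.mp hS0β ha (hMβ haj)
      · -- I0 vs mid
        have := hRfact a (hmidsub j hMj.1 hMj.2 haj)
        rcases hI0mem a hai with rfl | ha
        · exact this.1 hc
        · exact this.2.1 ha
      · omega
      · omega
      · omega
      · -- mid vs I0
        have := hRfact a (hmidsub i hMi.1 hMi.2 hai)
        rcases hI0mem a haj with rfl | ha
        · exact this.1 hc
        · exact this.2.1 ha
      · -- mid vs M
        rw [hE', hIvalL] at haj
        exact (hRfact a (hmidsub i hMi.1 hMi.2 hai)).1 (hMβ haj)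
      · -- mid vs mid
        rw [hIvalM i hMi.1 hMi.2] at hai
        rw [hIvalM j hMj.1 hMj.2] at haj
        obtain ⟨b1, hb1, he1⟩ := Finset.mem_image.mp hai
        obtain ⟨b2, hb2, he2⟩ := Finset.mem_image.mp haj
        rw [Finset.mem_range] at hb1 hb2
        have := hgetinj _ (hidxlt i b1 hMi.1 hMi.2 hb1) _ (hidxlt j b2 hMj.1 hMj.2 hb2)
          (he1.trans he2.symm)
        have := hidxinj i b1 j b2 hMi.1 hMi.2 hMj.1 hMj.2 hb1 hb2 this
        omega
    intro i hi j hj hij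
    rcases Nat.lt_or_ge i j with h | h
    · exact key i hi j hj h
    · exact (key j hj i hi (by omega)).symm
  have hcI' : ∀ i < t, ∀ j < t, cf i ∉ If j := by
    intro i hi j hj hmem
    rcases (by omega : j = 0 ∨ j = t-1 ∨ (1 ≤ j ∧ j ≤ t-2)) with rfl | hE | hMj
    · -- If 0 = insert c (S0.erase κ)
      rw [hIval0] at hmem
      rcases (by omega : i = 0 ∨ i = 1 ∨ i = t-1 ∨ (2 ≤ i ∧ i ≤ t-2)) with rfl | rfl | hE | hMi
      · rw [hcval0] at hmem
        rcases Finset.mem_insert.mp hmem with h | h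
        · exact hcu h.symm
        · exact hS0u (Finset.erase_subset _ _ h)
      · rw [hcval1] at hmem
        rcases Finset.mem_insert.mp hmem with h | h
        · exact hcκ h.symm
        · exact (Finset.mem_erase.mp h).1 rfl
      · rw [hE, hcvalL] at hmem
        rcases Finset.mem_insert.mp hmem with h | h
        · exact hcv h.symm
        · exact hS0v (Finset.erase_subset _ _ h)
      · rw [hcvalM i hMi.1 hMi.2] at hmem
        have hfact := hRfact _ (hgetmem (i-2) (by omega))
        rcases Finset.mem_insert.mp hmem with h | h
        · exact (hcR _ (by omega)) h.symm
        · exact hfact.2.1 (Finset.erase_subset _ _ h)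
    · -- M
      rw [hE, hIvalL] at hmem
      have hmβ := hMβ hmem
      rcases (by omega : i = 0 ∨ i = 1 ∨ i = t-1 ∨ (2 ≤ i ∧ i ≤ t-2)) with rfl | rfl | hE2 | hMi
      · rw [hcval0] at hmβ; exact hu hmβ
      · rw [hcval1] at hmβ; exact hκβ hmβ
      · rw [hE2, hcvalL] at hmβ; exact hv hmβ
      · rw [hcvalM i hMi.1 hMi.2] at hmβ
        exact (hRfact _ (hgetmem (i-2) (by omega))).1 hmβ
    · -- middle block
      rw [hIvalM j hMj.1 hMj.2] at hmem
      obtain ⟨b1, hb1, he1⟩ := Finset.mem_image.mp hmem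
      rw [Finset.mem_range] at hb1
      have hbin := hidxlt j b1 hMj.1 hMj.2 hb1
      rcases (by omega : i = 0 ∨ i = 1 ∨ i = t-1 ∨ (2 ≤ i ∧ i ≤ t-2)) with rfl | rfl | hE2 | hMi
      · rw [hcval0] at he1; exact (huR _ hbin) he1.symm
      · rw [hcval1] at he1; exact (hκR _ hbin) he1.symm
      · rw [hE2, hcvalL] at he1; exact (hvR _ hbin) he1.symm
      · rw [hcvalM i hMi.1 hMi.2] at he1
        have := hgetinj _ hbin _ (by omega) he1
        omega
  -- colors
  have hcol' : ∀ i < t, col ({cf i} ∪ If i ∪ {cf ((i+1) % t)}) = true := by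
    intro i hi
    rcases (by omega : i = 0 ∨ i = t-1 ∨ (1 ≤ i ∧ i ≤ t-2)) with rfl | hE | hMi
    · -- edge 0 is the red special edge
      have h1 : (0+1) % t = 1 := by rw [Nat.mod_eq_of_lt (by omega)]
      rw [h1, hcval0, hcval1, hIval0]
      have : ({u} ∪ insert c (S0.erase κ) ∪ {κ} : Finset V) = insert c (S0 ∪ {u}) := by
        ext a
        simp only [Finset.mem_union, Finset.mem_singleton, Finset.mem_insert, Finset.mem_erase]
        constructor
        · rintro ((rfl | (rfl | ⟨h1', h2'⟩)) | rfl)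
          · exact Or.inr (Or.inr rfl)
          · exact Or.inl rfl
          · exact Or.inr (Or.inl h2')
          · exact Or.inr (Or.inl hκ)
        · rintro (rfl | ha | rfl)
          · exact Or.inl (Or.inr (Or.inl rfl))
          · by_cases haκ : a = κ
            · exact Or.inr haκ
            · exact Or.inl (Or.inr (Or.inr ⟨haκ, ha⟩))
          · exact Or.inl (Or.inl rfl)
      rw [this]
      exact hred
    · -- last edge
      have h1 : t-1+1 = t := by omega
      rw [hE, h1, Nat.mod_self, hcvalL, hcval0, hIvalL]
      have : ({v} ∪ M ∪ {u} : Finset V) = insert u (insert v M) := by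
        ext a
        simp only [Finset.mem_union, Finset.mem_singleton, Finset.mem_insert]
        tauto
      rw [this]
      exact hMc
    · -- middle edges: subsets of the complement of β
      have hii : i ≠ (i+1) % t := by
        rw [Nat.mod_eq_of_lt (by omega)]; omega
      have hne : cf i ≠ cf ((i+1) % t) := fun h =>
        hii (hcinj' i hi ((i+1) % t) (Nat.mod_lt _ (by omega)) h)
      have hcard' : ({cf i} ∪ If i ∪ {cf ((i+1) % t)}).card = k :=
        card_edge3 (by omega) (hcI' i hi i hi) (hcI' ((i+1) % t) (Nat.mod_lt _ (by omega)) i hi)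
          hne (hIcard' i hi)
      apply red1 Hno2 hβk hβ hcard'
      rw [Finset.eq_empty_iff_forall_notMem]
      intro a ha
      rw [Finset.mem_inter] at ha
      obtain ⟨ha1, ha2⟩ := ha
      have hnotβ : ∀ m, 1 ≤ m → m ≤ t-1 → cf m ∉ β := by
        intro m h1 h2
        rcases (by omega : m = 1 ∨ m = t-1 ∨ (2 ≤ m ∧ m ≤ t-2)) with rfl | hE2 | hMm
        · rw [hcval1]; exact hκβ
        · rw [hE2, hcvalL]; exact hv
        · rw [hcvalM m hMm.1 hMm.2]
          exact (hRfact _ (hgetmem (m-2) (by omega))).1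
      rcases Finset.mem_union.mp ha1 with ha1 | ha1
      · rcases Finset.mem_union.mp ha1 with ha1 | ha1
        · rw [Finset.mem_singleton] at ha1
          subst ha1
          exact hnotβ i hMi.1 (by omega) ha2
        · exact (hRfact a (hmidsub i hMi.1 hMi.2 ha1)).1 ha2
      · rw [Finset.mem_singleton] at ha1
        subst ha1
        rw [Nat.mod_eq_of_lt (by omega : i+1 < t)] at ha2
        exact hnotβ (i+1) (by omega) (by omega) ha2
  exact cyc col true (by omega) (by omega) cf If hIcard' hcinj' hIdisj' hcI' hcol'

lemma forceBlue {k t : ℕ} (hk : 3 ≤ k) (ht : 5 ≤ t) {V : Type} [DecidableEq V] [Fintype V]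
    (hcard : Fintype.card V = t*(k-1)+1) {col : Finset V → Bool}
    (hnored : ¬ hasCycle k t col true) (hnoblue : ¬ hasCycle k 3 col false)
    (Hno2 : ¬ ∃ e f : Finset V, e.card = k ∧ f.card = k ∧ col e = false ∧ col f = false ∧ e ∩ f = ∅)
    {β : Finset V} (hβk : β.card = k) (hβ : col β = false)
    {x y : V} (hx : x ∈ β) (hy : y ∈ β) (hxy : x ≠ y)
    {u v : V} (hu : u ∉ β) (hv : v ∉ β) (huv : u ≠ v) :
    ∃ c ∈ β, (c = x ∨ c = y) ∧
      ∀ M ⊆ β.erase c, M.card = k-2 → col (insert u (insert v M)) = false := by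
  have hmul1 : 5*(k-1) ≤ t*(k-1) := Nat.mul_le_mul_right _ ht
  set Q : Finset V := (Finset.univ \ β) \ {u, v} with hQ
  have hQv : ∀ a ∈ Q, a ∉ β ∧ a ≠ u ∧ a ≠ v := by
    intro a ha
    rw [hQ] at ha
    simp only [Finset.mem_sdiff, Finset.mem_univ, true_and, Finset.mem_insert,
      Finset.mem_singleton] at ha
    exact ⟨ha.1, fun h => ha.2 (Or.inl h), fun h => ha.2 (Or.inr h)⟩
  have hQcard : t*(k-1)+1-k-2 ≤ Q.card := by
    have h1 : ((Finset.univ \ β) \ {u, v}).card ≥ (Finset.univ \ β).card - 2 := by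
      have := Finset.le_card_sdiff ({u, v} : Finset V) (Finset.univ \ β)
      have hc2 : ({u, v} : Finset V).card ≤ 2 := Finset.card_insert_le _ _ |>.trans (by simp)
      omega
    rw [Finset.card_sdiff_of_subset (Finset.subset_univ β), Finset.card_univ, hcard, hβk] at h1
    exact h1
  obtain ⟨S, hSQ, hScard⟩ := Finset.exists_subset_card_eq (s := Q) (n := k-2) (by omega)
  obtain ⟨T, hTQ, hTcard⟩ := Finset.exists_subset_card_eq (s := Q \ S) (n := k-2)
    (by rw [Finset.card_sdiff_of_subset hSQ]; omega)
  have hTQ' : T ⊆ Q := hTQ.trans (Finset.sdiff_subset)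
  have hTS : Disjoint T S := Finset.disjoint_of_subset_left hTQ (Finset.sdiff_disjoint)
  have hSβ : Disjoint S β := Finset.disjoint_left.mpr (fun {a} ha => (hQv _ (hSQ ha)).1)
  have hTβ : Disjoint T β := Finset.disjoint_left.mpr (fun {a} ha => (hQv _ (hTQ' ha)).1)
  have hSu : u ∉ S := fun h => (hQv _ (hSQ h)).2.1 rfl
  have hTu : u ∉ T := fun h => (hQv _ (hTQ' h)).2.1 rfl
  have hSv : v ∉ S := fun h => (hQv _ (hSQ h)).2.2 rfl
  have hTv : v ∉ T := fun h => (hQv _ (hTQ' h)).2.2 rfl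
  have hcore := pair_core hk hnoblue hβk hβ hx hy hxy hScard hTcard hSβ hTβ hTS.symm hu hSu hTu
  rcases hcore with hred | hred
  · exact ⟨y, hy, Or.inr rfl,
      star_aux hk ht hcard hnored Hno2 hβk hβ hu hv huv hy hScard hSβ hSu hSv hred⟩
  · exact ⟨x, hx, Or.inl rfl,
      star_aux hk ht hcard hnored Hno2 hβk hβ hu hv huv hx hTcard hTβ hTu hTv hred⟩

lemma caseB {k t : ℕ} (hk : 3 ≤ k) (ht : 5 ≤ t) {V : Type} [DecidableEq V] [Fintype V]
    (hcard : Fintype.card V = t*(k-1)+1) {col : Finset V → Bool}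
    (hnored : ¬ hasCycle k t col true) (hnoblue : ¬ hasCycle k 3 col false)
    (Hno2 : ¬ ∃ e f : Finset V, e.card = k ∧ f.card = k ∧ col e = false ∧ col f = false ∧ e ∩ f = ∅) :
    False := by
  have hmul1 : 5*(k-1) ≤ t*(k-1) := Nat.mul_le_mul_right _ ht
  by_cases hb : ∃ β : Finset V, β.card = k ∧ col β = false
  · obtain ⟨b, hbk, hbcol⟩ := hb
    have key : ∀ a (β : Finset V), β.card = k → col β = false → (β ∩ b).card = a → False := by
      intro a
      induction a using Nat.strong_induction_on with
      | _ a ih =>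
        intro β hβk hβ hab
        by_cases h0 : (β ∩ b).card = 0
        · exact Hno2 ⟨β, b, hβk, hbk, hβ, hbcol, Finset.card_eq_zero.mp h0⟩
        · obtain ⟨w, hw⟩ := Finset.card_pos.mp (by omega : 0 < (β ∩ b).card)
          have hwβ : w ∈ β := (Finset.mem_inter.mp hw).1
          obtain ⟨y', hy'⟩ := Finset.card_pos.mp (show 0 < (β.erase w).card by
            rw [Finset.card_erase_of_mem hwβ]; omega)
          have hy'β : y' ∈ β := Finset.erase_subset _ _ hy'
          have hwy' : w ≠ y' := fun h => (Finset.mem_erase.mp hy').1 h.symm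
          have hpool : 2 ≤ ((Finset.univ \ β) \ b).card := by
            have h1 := Finset.le_card_sdiff b (Finset.univ \ β)
            rw [Finset.card_sdiff_of_subset (Finset.subset_univ β), Finset.card_univ, hcard, hβk] at h1
            rw [hbk] at h1
            omega
          obtain ⟨P2, hP2sub, hP2card⟩ := Finset.exists_subset_card_eq (n := 2) hpool
          obtain ⟨u, v, huv, hP2⟩ := Finset.card_eq_two.mp hP2card
          have humem : u ∈ (Finset.univ \ β) \ b := hP2sub (by rw [hP2]; simp)
          have hvmem : v ∈ (Finset.univ \ β) \ b := hP2sub (by rw [hP2]; simp)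
          simp only [Finset.mem_sdiff, Finset.mem_univ, true_and] at humem hvmem
          obtain ⟨c, hcβ, hcxy, hforced⟩ := forceBlue hk ht hcard hnored hnoblue Hno2 hβk hβ
            hwβ hy'β hwy' humem.1 hvmem.1 huv
          set d : V := if c = w then y' else w with hd
          have hdβ : d ∈ β := by
            by_cases h : c = w <;> simp [hd, h, hy'β, hwβ]
          have hcd : c ≠ d := by
            by_cases h : c = w
            · rw [hd, if_pos h, h]; exact hwy'
            · rw [hd, if_neg h]; exact h
          have hdec : d ∈ β.erase c := Finset.mem_erase.mpr ⟨fun h => hcd h.symm, hdβ⟩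
          set M : Finset V := (β.erase c).erase d with hMdef
          have hMsub : M ⊆ β.erase c := Finset.erase_subset _ _
          have hMβ : M ⊆ β := hMsub.trans (Finset.erase_subset _ _)
          have hMcard : M.card = k-2 := by
            rw [hMdef, Finset.card_erase_of_mem hdec, Finset.card_erase_of_mem hcβ, hβk]
            omega
          have hblue := hforced M hMsub hMcard
          have huM : u ∉ M := fun h => humem.1 (hMβ h)
          have hvM : v ∉ M := fun h => hvmem.1 (hMβ h)
          have hβ'k : (insert u (insert v M)).card = k := by
            rw [Finset.card_insert_of_notMem (by simp [huv, huM]),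
              Finset.card_insert_of_notMem hvM, hMcard]
            omega
          have hwM : w ∉ M := by
            rw [hMdef]
            by_cases h : c = w
            · intro hmem
              exact (Finset.mem_erase.mp ((Finset.erase_subset _ _) hmem)).1 (h ▸ rfl)
            · intro hmem
              have : w ≠ d := (Finset.mem_erase.mp hmem).1
              rw [hd, if_neg h] at this
              exact this rfl
          have hsubkey : (insert u (insert v M)) ∩ b ⊆ (β ∩ b).erase w := by
            intro a ha
            rw [Finset.mem_inter] at ha
            obtain ⟨ha1, ha2⟩ := ha
            rcases Finset.mem_insert.mp ha1 with rfl | ha1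
            · exact absurd ha2 humem.2
            rcases Finset.mem_insert.mp ha1 with rfl | ha1
            · exact absurd ha2 hvmem.2
            · exact Finset.mem_erase.mpr ⟨fun h => hwM (h ▸ ha1),
                Finset.mem_inter.mpr ⟨hMβ ha1, ha2⟩⟩
          have hlt : ((insert u (insert v M)) ∩ b).card < a := by
            have h1 := Finset.card_le_card hsubkey
            rw [Finset.card_erase_of_mem hw] at h1
            omega
          exact ih _ hlt _ hβ'k hblue rfl
    exact key _ b hbk hbcol rfl
  · push_neg at hb
    apply hnored
    apply triv col (by omega) (by omega) (by rw [hcard]; omega)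
    intro e he
    cases h : col e
    · exact absurd h (hb e he)
    · rfl

theorem two_disjoint_red_blue_pairs (k t : ℕ) (hk : 3 ≤ k) (ht : 5 ≤ t)
    (col : Finset (Fin (t * (k - 1) + 1)) → Bool)
    (hnored : ¬ hasCycle k t col true)
    (hnoblue : ¬ hasCycle k 3 col false) :
    ∃ e₁ e₂ f₁ f₂ : Finset (Fin (t * (k - 1) + 1)),
      e₁.card = k ∧ e₂.card = k ∧ f₁.card = k ∧ f₂.card = k ∧
      col e₁ = true ∧ col e₂ = false ∧ col f₁ = true ∧ col f₂ = false ∧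
      (e₁ ∩ e₂).Nonempty ∧ (f₁ ∩ f₂).Nonempty ∧
      (e₁ ∪ e₂) ∩ (f₁ ∪ f₂) = ∅ := by
  have hcard : Fintype.card (Fin (t*(k-1)+1)) = t*(k-1)+1 := Fintype.card_fin _
  have hmul1 : 5*(k-1) ≤ t*(k-1) := Nat.mul_le_mul_right _ ht
  by_cases Hno2 : ∃ e f : Finset (Fin (t*(k-1)+1)),
      e.card = k ∧ f.card = k ∧ col e = false ∧ col f = false ∧ e ∩ f = ∅
  · obtain ⟨b1, b2, hb1k, hb2k, hb1, hb2, hd⟩ := Hno2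
    set R1 : Finset (Fin (t*(k-1)+1)) := (Finset.univ \ b1) \ b2 with hR1
    have hR1b1 : Disjoint R1 b1 :=
      Finset.disjoint_of_subset_left (Finset.sdiff_subset) (Finset.sdiff_disjoint)
    have hR1card : 2*k-3 ≤ R1.card := by
      have h1 := Finset.le_card_sdiff b2 (Finset.univ \ b1)
      rw [Finset.card_sdiff_of_subset (Finset.subset_univ b1), Finset.card_univ, hcard, hb1k, hb2k,
        ← hR1] at h1
      omega
    obtain ⟨r1, hr1k, hr1col, hr1b1, hr1sub⟩ := pairL hk hnoblue hb1k hb1 hR1b1 hR1card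
    set R2 : Finset (Fin (t*(k-1)+1)) := Finset.univ \ (b1 ∪ r1 ∪ b2) with hR2
    have hR2b2 : Disjoint R2 b2 := by
      rw [hR2]
      exact Finset.disjoint_of_subset_right (Finset.subset_union_right) (Finset.sdiff_disjoint)
    have hub1r1 : (b1 ∪ r1).card ≤ 2*k-1 := by
      have h1 := Finset.card_union_add_card_inter b1 r1
      have h2 : 0 < (b1 ∩ r1).card := by
        rw [Finset.inter_comm]
        exact Finset.card_pos.mpr hr1b1
      omega
    have hR2card : 2*k-3 ≤ R2.card := by
      rw [hR2, Finset.card_sdiff_of_subset (Finset.subset_univ _), Finset.card_univ, hcard]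
      have h1 : (b1 ∪ r1 ∪ b2).card ≤ (b1 ∪ r1).card + b2.card := Finset.card_union_le _ _
      omega
    obtain ⟨r2, hr2k, hr2col, hr2b2, hr2sub⟩ := pairL hk hnoblue hb2k hb2 hR2b2 hR2card
    refine ⟨r1, b1, r2, b2, hr1k, hb1k, hr2k, hb2k, hr1col, hb1, hr2col, hb2, hr1b1, hr2b2, ?_⟩
    rw [Finset.eq_empty_iff_forall_notMem]
    intro a ha
    rw [Finset.mem_inter] at ha
    obtain ⟨haL, haR⟩ := ha
    have haL' : a ∈ b1 ∪ r1 := by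
      rcases Finset.mem_union.mp haL with h | h
      · exact Finset.mem_union_right _ h
      · exact Finset.mem_union_left _ h
    rcases Finset.mem_union.mp haR with h | h
    · -- a ∈ r2 ⊆ R2 ∪ b2
      rcases Finset.mem_union.mp (hr2sub h) with h2 | h2
      · rw [hR2, Finset.mem_sdiff] at h2
        exact h2.2 (Finset.mem_union_left _ haL')
      · -- a ∈ b2 and a ∈ b1 ∪ r1
        rcases Finset.mem_union.mp haL' with h3 | h3
        · exact Finset.disjoint_left.mp (Finset.disjoint_iff_inter_eq_empty.mpr hd) h3 h2
        · rcases Finset.mem_union.mp (hr1sub h3) with h4 | h4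
          · rw [hR1, Finset.mem_sdiff] at h4
            exact h4.2 h2
          · exact Finset.disjoint_left.mp (Finset.disjoint_iff_inter_eq_empty.mpr hd) h4 h2
    · -- a ∈ b2
      rcases Finset.mem_union.mp haL' with h3 | h3
      · exact Finset.disjoint_left.mp (Finset.disjoint_iff_inter_eq_empty.mpr hd) h3 h
      · rcases Finset.mem_union.mp (hr1sub h3) with h4 | h4
        · rw [hR1, Finset.mem_sdiff] at h4
          exact h4.2 h
        · exact Finset.disjoint_left.mp (Finset.disjoint_iff_inter_eq_empty.mpr hd) h4 h
  · exact (caseB hk ht hcard hnored hnoblue Hno2).elim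
end

section
/- Let k ≥ 3 and t ≥ 5 be integers, and suppose all k-element subsets of a vertex set of size t(k−1)+1 are colored red or blue with no red copy of the k-uniform loose cycle C^k_t and no blue copy of C^k_3. Then there exist a red k-set e_1 and a blue k-set e_2 with |e_1 ∩ e_2| = k − 1, and a red k-set f_1 and a blue k-set f_2 with |f_1 ∩ f_2| = k − 1, such that (e_1 ∪ e_2) ∩ (f_1 ∪ f_2) = ∅. -/
open Finset

lemma idx_inj {M a j₁ j₂ : ℕ} (h₁ : j₁ < M) (h₂ : j₂ < M)
    (h : (a + j₁) % M = (a + j₂) % M) : j₁ = j₂ := by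
  rcases le_total j₁ j₂ with hle | hle
  · have hd : M ∣ (a + j₂) - (a + j₁) := (Nat.modEq_iff_dvd' (by omega)).1 h
    have h2 : (a + j₂) - (a + j₁) = j₂ - j₁ := by omega
    rw [h2] at hd
    have := Nat.eq_zero_of_dvd_of_lt hd
    omega
  · have hd : M ∣ (a + j₁) - (a + j₂) := (Nat.modEq_iff_dvd' (by omega)).1 h.symm
    have h2 : (a + j₁) - (a + j₂) = j₁ - j₂ := by omega
    rw [h2] at hd
    have := Nat.eq_zero_of_dvd_of_lt hd
    omega

section Basic
variable {N : ℕ}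

/-- positions of window `i` -/
def pset (k n i : ℕ) : Finset ℕ :=
  (Finset.range k).image (fun j => (i * (k - 1) + j) % (n * (k - 1)))

lemma cycleEdge_eq_image (k n : ℕ) (f : ℕ → Fin N) (i : ℕ) :
    cycleEdge k n f i = (pset k n i).image f := by
  rw [pset, Finset.image_image]; rfl

lemma pset_subset (k n i : ℕ) (hM : 0 < n * (k-1)) : pset k n i ⊆ Finset.range (n * (k-1)) := by
  intro r hr
  simp only [pset, Finset.mem_image, Finset.mem_range] at hr ⊢
  obtain ⟨j, _, rfl⟩ := hr
  exact Nat.mod_lt _ hM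

lemma pset_card (k n i : ℕ) (hkM : k ≤ n * (k-1)) : (pset k n i).card = k := by
  rw [pset, Finset.card_image_of_injOn, Finset.card_range]
  intro j₁ h₁ j₂ h₂ h
  simp only [Finset.coe_range, Set.mem_Iio, Finset.mem_coe, Finset.mem_range] at h₁ h₂
  exact idx_inj (by omega) (by omega) h

lemma cycleEdge_card (k n : ℕ) (hk : 0 < k) (hkM : k ≤ n * (k-1)) (f : ℕ → Fin N)
    (hf : Set.InjOn f (Set.Iio (n * (k-1)))) (i : ℕ) : (cycleEdge k n f i).card = k := by
  rw [cycleEdge_eq_image]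
  rw [Finset.card_image_of_injOn, pset_card k n i hkM]
  intro r₁ h₁ r₂ h₂ h
  have hM : 0 < n * (k-1) := by omega
  have := pset_subset k n i hM
  exact hf (Set.mem_Iio.2 (Finset.mem_range.1 (this h₁))) (Set.mem_Iio.2 (Finset.mem_range.1 (this h₂))) h

lemma cycleEdge_subset (k n : ℕ) (f : ℕ → Fin N) (i : ℕ) (U : Finset (Fin N))
    (hM : 0 < n * (k-1)) (h : ∀ m < n * (k-1), f m ∈ U) : cycleEdge k n f i ⊆ U := by
  rw [cycleEdge_eq_image]
  intro v hv
  obtain ⟨r, hr, rfl⟩ := Finset.mem_image.1 hv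
  exact h r (Finset.mem_range.1 (pset_subset k n i hM hr))

/-- Johnson-graph connectivity: if all (k+1)-subsets of `U` are monochromatic
(in the sense that their k-subsets all share a color), then all k-subsets of U
have the same color. -/
lemma johnson {k : ℕ} (hk : 1 ≤ k) (col : Finset (Fin N) → Bool) (U : Finset (Fin N))
    (hT : ∀ T ⊆ U, T.card = k+1 → ∀ s₁ ⊆ T, ∀ s₂ ⊆ T, s₁.card = k → s₂.card = k →
      col s₁ = col s₂) :
    ∀ e₁ ⊆ U, ∀ e₂ ⊆ U, e₁.card = k → e₂.card = k → col e₁ = col e₂ := by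
  intro e₁ he₁U e₂ he₂U h₁ h₂
  suffices H : ∀ d, ∀ e₁, e₁ ⊆ U → e₁.card = k → (e₁ \ e₂).card = d → col e₁ = col e₂ by
    exact H _ e₁ he₁U h₁ rfl
  intro d
  induction d with
  | zero =>
    intro e₁ hU h₁ hd
    have hsub : e₁ ⊆ e₂ := by
      rw [← Finset.sdiff_eq_empty_iff_subset]
      exact Finset.card_eq_zero.1 hd
    rw [Finset.eq_of_subset_of_card_le hsub (by omega)]
  | succ d ih =>
    intro e₁ hU h₁ hd
    obtain ⟨x, hx⟩ : (e₁ \ e₂).Nonempty := by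
      rw [← Finset.card_pos, hd]; omega
    have hne : (e₂ \ e₁).Nonempty := by
      by_contra h
      have h0 : e₂ ⊆ e₁ := by
        rw [← Finset.sdiff_eq_empty_iff_subset]
        exact Finset.not_nonempty_iff_eq_empty.1 h
      have : e₂ = e₁ := Finset.eq_of_subset_of_card_le h0 (by omega)
      rw [this, Finset.sdiff_self] at hd
      simp at hd
    obtain ⟨y, hy⟩ := hne
    rw [Finset.mem_sdiff] at hx hy
    set e' : Finset (Fin N) := insert y (e₁.erase x) with he'
    have hyx : y ∉ e₁.erase x := fun h => hy.2 (Finset.mem_of_mem_erase h)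
    have hcard' : e'.card = k := by
      rw [he', Finset.card_insert_of_notMem hyx, Finset.card_erase_of_mem hx.1, h₁]
      omega
    have hyU : y ∈ U := he₂U hy.1
    have hTsub : insert y e₁ ⊆ U := Finset.insert_subset hyU hU
    have hTcard : (insert y e₁).card = k + 1 := by
      rw [Finset.card_insert_of_notMem hy.2, h₁]
    have hcol : col e₁ = col e' :=
      hT (insert y e₁) hTsub hTcard e₁ (Finset.subset_insert _ _) e'
        (by
          rw [he']
          exact Finset.insert_subset_insert _ (Finset.erase_subset _ _))
        h₁ hcard'
    rw [hcol]
    apply ih e' _ hcard'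
    · rw [he', Finset.insert_sdiff_of_mem _ hy.1, Finset.erase_sdiff_comm,
        Finset.card_erase_of_mem (Finset.mem_sdiff.2 hx), hd]
      omega
    · rw [he']
      exact Finset.insert_subset hyU ((Finset.erase_subset _ _).trans hU)

/-- a monochromatic clique of size `n*(k-1)` gives a monochromatic loose cycle. -/
lemma clique_cycle {k n : ℕ} (hk : 3 ≤ k) (hn : 3 ≤ n) (col : Finset (Fin N) → Bool) (b : Bool)
    (U : Finset (Fin N)) (hU : n * (k-1) ≤ U.card)
    (hmono : ∀ e ⊆ U, e.card = k → col e = b) : hasCycle k n col b := by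
  have hkM : k ≤ n * (k-1) := by
    have h2 : 3*(k-1) ≤ n*(k-1) := Nat.mul_le_mul_right _ hn
    omega
  have hM : 0 < n * (k-1) := by omega
  obtain ⟨T, hTU, hT⟩ := Finset.exists_subset_card_eq hU
  let g := T.orderIsoOfFin hT
  refine ⟨fun m => if h : m < n * (k-1) then (g ⟨m, h⟩ : Fin N) else (g ⟨0, hM⟩ : Fin N), ?_, ?_⟩
  · intro m₁ hm₁ m₂ hm₂ h
    simp only [Set.mem_Iio] at hm₁ hm₂
    simp only [dif_pos hm₁, dif_pos hm₂] at h
    have : (⟨m₁, hm₁⟩ : Fin (n*(k-1))) = ⟨m₂, hm₂⟩ := by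
      apply g.injective
      exact Subtype.coe_injective h
    simpa using this
  · intro i hi
    apply hmono
    · apply cycleEdge_subset k n _ i U hM
      intro m hm
      rw [dif_pos hm]
      exact hTU (g ⟨m, hm⟩).2
    · apply cycleEdge_card k n (by omega : 0 < k) hkM
      intro m₁ hm₁ m₂ hm₂ h
      simp only [Set.mem_Iio] at hm₁ hm₂
      simp only [dif_pos hm₁, dif_pos hm₂] at h
      have : (⟨m₁, hm₁⟩ : Fin (n*(k-1))) = ⟨m₂, hm₂⟩ := by
        apply g.injective
        exact Subtype.coe_injective h
      simpa using this

end Basic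

lemma pset_zero {k t : ℕ} (hk : 3 ≤ k) (ht : 5 ≤ t) : pset k t 0 = Finset.range k := by
  have hkM := Nat.mul_le_mul_right (k-1) ht
  ext r
  simp only [pset, Finset.mem_image, Finset.mem_range, Nat.zero_mul, Nat.zero_add]
  constructor
  · rintro ⟨j, hj, rfl⟩
    rw [Nat.mod_eq_of_lt (by omega)]
    exact hj
  · intro hr
    exact ⟨r, hr, Nat.mod_eq_of_lt (by omega)⟩

lemma mem_pset_iff {k t i r : ℕ} (hk : 3 ≤ k) (ht : 5 ≤ t) (hi : i < t) :
    r ∈ pset k t i ↔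
      (i*(k-1) ≤ r ∧ r ≤ i*(k-1)+(k-1) ∧ r < t*(k-1)) ∨ (i = t-1 ∧ r = 0) := by
  have hM5 := Nat.mul_le_mul_right (k-1) ht
  have hsub : (t-1)*(k-1) + (k-1) = t*(k-1) := by
    have e1 : (t-1)*(k-1) + (k-1) = (t-1+1)*(k-1) := by ring
    rw [e1, Nat.sub_add_cancel (by omega)]
  have hi1 : i*(k-1) + (k-1) ≤ t*(k-1) := by
    have h1 : i*(k-1) ≤ (t-1)*(k-1) := Nat.mul_le_mul_right _ (by omega)
    omega
  constructor
  · intro hr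
    rw [pset, Finset.mem_image] at hr
    obtain ⟨j, hj, rfl⟩ := hr
    rw [Finset.mem_range] at hj
    rcases Nat.lt_or_ge (i*(k-1)+j) (t*(k-1)) with hlt | hge
    · left
      rw [Nat.mod_eq_of_lt hlt]
      omega
    · have heq : i*(k-1)+j = t*(k-1) := by omega
      right
      have hit : i = t-1 := by
        by_contra hne
        have h1 : i*(k-1) ≤ (t-2)*(k-1) := Nat.mul_le_mul_right _ (by omega)
        have h2 : (t-2)*(k-1) + (k-1) = (t-1)*(k-1) := by
          have e1 : (t-2)*(k-1) + (k-1) = (t-2+1)*(k-1) := by ring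
          rw [e1]; congr 1; omega
        omega
      exact ⟨hit, by rw [heq]; exact Nat.mod_self _⟩
  · intro hr
    rcases hr with ⟨h1, h2, h3⟩ | ⟨hit, hr0⟩
    · rw [pset, Finset.mem_image]
      refine ⟨r - i*(k-1), Finset.mem_range.2 (by omega), ?_⟩
      rw [Nat.add_sub_cancel' h1]
      exact Nat.mod_eq_of_lt h3
    · rw [pset, Finset.mem_image]
      refine ⟨k-1, Finset.mem_range.2 (by omega), ?_⟩
      subst hit
      subst hr0
      rw [hsub]
      exact Nat.mod_self _

lemma pset_inter_subsingleton {k t i : ℕ} (hk : 3 ≤ k) (ht : 5 ≤ t) (hi : i < t) (hi0 : i ≠ 0) :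
    ∀ r₁ ∈ pset k t i, r₁ ∈ pset k t 0 → ∀ r₂ ∈ pset k t i, r₂ ∈ pset k t 0 → r₁ = r₂ := by
  intro r₁ h₁ h₁0 r₂ h₂ h₂0
  rw [mem_pset_iff hk ht hi] at h₁ h₂
  rw [pset_zero hk ht, Finset.mem_range] at h₁0 h₂0
  have h1m : 1*(k-1) ≤ i*(k-1) := Nat.mul_le_mul_right _ (by omega)
  have h2m : 2 ≤ i → 2*(k-1) ≤ i*(k-1) := fun h => Nat.mul_le_mul_right _ h
  rcases h₁ with ⟨a1,a2,a3⟩ | ⟨b1,b2⟩ <;> rcases h₂ with ⟨c1,c2,c3⟩ | ⟨d1,d2⟩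
  · rcases Nat.lt_or_ge i 2 with h | h
    · omega
    · have := h2m h; omega
  · exfalso; have := h2m (by omega : 2 ≤ i); omega
  · exfalso; have := h2m (by omega : 2 ≤ i); omega
  · omega

lemma pset_inter_empty {k t i q : ℕ} (hk : 3 ≤ k) (ht : 5 ≤ t) (hi : i < t)
    (hq1 : 2*(k-1)+1 ≤ q) (hq2 : q ≤ (t-1)*(k-1)-1) (hqi : q ∈ pset k t i) :
    ∀ r ∈ pset k t i, r ∉ pset k t 0 := by
  have h1m : 1*(k-1) ≤ (t-1)*(k-1) := Nat.mul_le_mul_right _ (by omega)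
  rw [mem_pset_iff hk ht hi] at hqi
  have hibound : 2 ≤ i ∧ i ≤ t-2 := by
    rcases hqi with ⟨a1, a2, a3⟩ | ⟨b1, b2⟩
    · constructor
      · by_contra h
        have h1 : i*(k-1) ≤ 1*(k-1) := Nat.mul_le_mul_right _ (by omega)
        omega
      · by_contra h
        have hieq : i = t-1 := by omega
        rw [hieq] at a1
        omega
    · omega
  have h2m : 2*(k-1) ≤ i*(k-1) := Nat.mul_le_mul_right _ hibound.1
  intro r hr hr0
  rw [mem_pset_iff hk ht hi] at hr
  rw [pset_zero hk ht, Finset.mem_range] at hr0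
  rcases hr with ⟨a1, a2, a3⟩ | ⟨b1, b2⟩
  · omega
  · omega

def swapf {V : Type} (f : ℕ → V) (p q : ℕ) : ℕ → V :=
  fun m => if m = p then f q else if m = q then f p else f m

lemma swapf_injOn {N : ℕ} {f : ℕ → Fin N} {M p q : ℕ} (hf : Set.InjOn f (Set.Iio M))
    (hp : p < M) (hq : q < M) : Set.InjOn (swapf f p q) (Set.Iio M) := by
  intro m₁ hm₁ m₂ hm₂ h
  simp only [swapf] at h
  have hm₁' : (m₁ : ℕ) < M := hm₁
  have hm₂' : (m₂ : ℕ) < M := hm₂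
  split_ifs at h with h1 h2 h3 h4 h5
  all_goals first
  | omega
  | (have hx := hf (Set.mem_Iio.2 hq) (Set.mem_Iio.2 hp) h; omega)
  | (have hx := hf (Set.mem_Iio.2 hp) (Set.mem_Iio.2 hq) h; omega)
  | (have hx := hf (Set.mem_Iio.2 hq) hm₂ h; omega)
  | (have hx := hf (Set.mem_Iio.2 hp) hm₂ h; omega)
  | (have hx := hf hm₁ (Set.mem_Iio.2 hq) h; omega)
  | (have hx := hf hm₁ (Set.mem_Iio.2 hp) h; omega)
  | (have hx := hf hm₁ hm₂ h; omega)

lemma swapf_comm {V : Type} (f : ℕ → V) {p q : ℕ} (h : p ≠ q) : swapf f p q = swapf f q p := by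
  funext m
  simp only [swapf]
  split_ifs with h1 h2 <;> first | rfl | (exact absurd (h1.symm.trans h2).symm h) | (exact absurd (h1.symm.trans h2) h)

lemma image_swapf {N M : ℕ} {f : ℕ → Fin N} (hf : Set.InjOn f (Set.Iio M))
    {S : Finset ℕ} (hS : ∀ r ∈ S, r < M) {p q : ℕ} (hp : p ∈ S) (hq : q ∉ S) (hqM : q < M) :
    S.image (swapf f p q) = insert (f q) ((S.image f).erase (f p)) := by
  ext v
  simp only [Finset.mem_image, Finset.mem_insert, Finset.mem_erase]
  constructor
  · rintro ⟨r, hr, rfl⟩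
    by_cases hrp : r = p
    · left; simp [swapf, hrp]
    · have hrq : r ≠ q := fun h => hq (h ▸ hr)
      right
      refine ⟨?_, ⟨r, hr, by simp [swapf, hrp, hrq]⟩⟩
      simp only [swapf, if_neg hrp, if_neg hrq]
      intro hfr
      exact hrp (hf (Set.mem_Iio.2 (hS r hr)) (Set.mem_Iio.2 (hS p hp)) hfr)
  · rintro (rfl | ⟨hne, r, hr, rfl⟩)
    · exact ⟨p, hp, by simp [swapf]⟩
    · have hrp : r ≠ p := fun h => hne (by rw [h])
      have hrq : r ≠ q := fun h => hq (h ▸ hr)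
      exact ⟨r, hr, by simp [swapf, hrp, hrq]⟩

lemma image_swapf_of_notMem {V : Type} [DecidableEq V] {f : ℕ → V} {S : Finset ℕ} {p q : ℕ}
    (hp : p ∉ S) (hq : q ∉ S) : S.image (swapf f p q) = S.image f := by
  apply Finset.image_congr
  intro r hr
  have h1 : r ≠ p := fun h => hp (h ▸ hr)
  have h2 : r ≠ q := fun h => hq (h ▸ hr)
  simp [swapf, h1, h2]

lemma exists_enum {N : ℕ} (c : ℕ) (U : Finset (Fin N)) (hU : c ≤ U.card) (d : Fin N) :
    ∃ g : ℕ → Fin N, (∀ m, m < c → g m ∈ U) ∧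
      (∀ m₁, m₁ < c → ∀ m₂, m₂ < c → g m₁ = g m₂ → m₁ = m₂) := by
  obtain ⟨T, hTU, hT⟩ := Finset.exists_subset_card_eq hU
  refine ⟨fun m => if h : m < c then (T.orderIsoOfFin hT ⟨m, h⟩ : Fin N) else d, ?_, ?_⟩
  · intro m hm
    simp only [dif_pos hm]
    exact hTU (T.orderIsoOfFin hT ⟨m, hm⟩).2
  · intro m₁ h₁ m₂ h₂ h
    simp only [dif_pos h₁, dif_pos h₂] at h
    have := (T.orderIsoOfFin hT).injective (Subtype.coe_injective h)
    simpa using this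

/-- C2: two (k+1)-sets meeting in exactly one point, with both complements red cliques,
yield a red loose cycle. -/
lemma two_clique_cycle {k t : ℕ} (hk : 3 ≤ k) (ht : 5 ≤ t)
    (col : Finset (Fin (t*(k-1)+1)) → Bool)
    (S₁ S₂ : Finset (Fin (t*(k-1)+1))) (x : Fin (t*(k-1)+1))
    (hc₁ : S₁.card = k+1) (hc₂ : S₂.card = k+1) (hxx : S₁ ∩ S₂ = {x})
    (hred₁ : ∀ e, e.card = k → Disjoint e S₁ → col e = true)
    (hred₂ : ∀ e, e.card = k → Disjoint e S₂ → col e = true) :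
    hasCycle k t col true := by
  have hM5 : 5 * (k-1) ≤ t * (k-1) := Nat.mul_le_mul_right _ ht
  have hPK : (t-1) * (k-1) + (k-1) = t * (k-1) := by
    have h5 : (t-1) * (k-1) + (k-1) = (t-1+1) * (k-1) := by ring
    rw [h5, Nat.sub_add_cancel (by omega : 1 ≤ t)]
  have hQP : (t-2) * (k-1) + (k-1) = (t-1) * (k-1) := by
    have h5 : (t-2) * (k-1) + (k-1) = (t-2+1) * (k-1) := by ring
    rw [h5]
    congr 1
    omega
  have hxmem : x ∈ S₁ ∩ S₂ := by rw [hxx]; exact Finset.mem_singleton_self x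
  have hx₁ : x ∈ S₁ := (Finset.mem_inter.1 hxmem).1
  have hx₂ : x ∈ S₂ := (Finset.mem_inter.1 hxmem).2
  have hUnivCard : (Finset.univ : Finset (Fin (t*(k-1)+1))).card = t*(k-1) + 1 := by
    rw [Finset.card_univ, Fintype.card_fin]
  have hUnion : (S₁ ∪ S₂).card = 2*(k-1) + 3 := by
    have h := Finset.card_union_add_card_inter S₁ S₂
    rw [hc₁, hc₂, hxx, Finset.card_singleton] at h
    omega
  set W : Finset (Fin (t*(k-1)+1)) := Finset.univ \ (S₁ ∪ S₂) with hWdef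
  have hWcard : W.card = t*(k-1) + 1 - (2*(k-1)+3) := by
    rw [hWdef, Finset.card_sdiff_of_subset (Finset.subset_univ _), hUnivCard, hUnion]
  obtain ⟨B', hB'W, hB'card⟩ := Finset.exists_subset_card_eq
    (show k-1 ≤ W.card by omega)
  have hA1card : (k-1) + 1 ≤ (S₁.erase x).card := by
    rw [Finset.card_erase_of_mem hx₁, hc₁]; omega
  have hA3card : (k-1) + 1 ≤ (S₂.erase x).card := by
    rw [Finset.card_erase_of_mem hx₂, hc₂]; omega
  have hA4card : t*(k-1) - (3*(k-1)+2) ≤ (W \ B').card := by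
    rw [Finset.card_sdiff_of_subset hB'W, hWcard, hB'card]; omega
  obtain ⟨g₁, hg₁m, hg₁i⟩ := exists_enum ((k-1)+1) (S₁.erase x) hA1card x
  obtain ⟨g₂, hg₂m, hg₂i⟩ := exists_enum (k-1) B' (le_of_eq hB'card.symm) x
  obtain ⟨g₃, hg₃m, hg₃i⟩ := exists_enum ((k-1)+1) (S₂.erase x) hA3card x
  obtain ⟨g₄, hg₄m, hg₄i⟩ := exists_enum (t*(k-1) - (3*(k-1)+2)) (W \ B') hA4card x
  set f : ℕ → Fin (t*(k-1)+1) := fun m =>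
    if m ≤ k-1 then g₁ m
    else if m ≤ 2*(k-1) then g₂ (m - ((k-1)+1))
    else if m ≤ 3*(k-1)+1 then g₃ (m - (2*(k-1)+1))
    else g₄ (m - (3*(k-1)+2)) with hfdef
  have hd12 : ∀ v : Fin (t*(k-1)+1), v ∈ S₁.erase x → v ∈ B' → False := by
    intro v h1 h2
    have h3 := hB'W h2
    rw [hWdef, Finset.mem_sdiff, Finset.mem_union] at h3
    exact h3.2 (Or.inl (Finset.mem_of_mem_erase h1))
  have hd13 : ∀ v : Fin (t*(k-1)+1), v ∈ S₁.erase x → v ∈ S₂.erase x → False := by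
    intro v h1 h2
    have h3 : v ∈ S₁ ∩ S₂ := Finset.mem_inter.2 ⟨Finset.mem_of_mem_erase h1, Finset.mem_of_mem_erase h2⟩
    rw [hxx, Finset.mem_singleton] at h3
    exact (Finset.ne_of_mem_erase h1) h3
  have hd14 : ∀ v : Fin (t*(k-1)+1), v ∈ S₁.erase x → v ∈ W \ B' → False := by
    intro v h1 h2
    have h3 := (Finset.mem_sdiff.1 h2).1
    rw [hWdef, Finset.mem_sdiff, Finset.mem_union] at h3
    exact h3.2 (Or.inl (Finset.mem_of_mem_erase h1))
  have hd23 : ∀ v : Fin (t*(k-1)+1), v ∈ B' → v ∈ S₂.erase x → False := by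
    intro v h1 h2
    have h3 := hB'W h1
    rw [hWdef, Finset.mem_sdiff, Finset.mem_union] at h3
    exact h3.2 (Or.inr (Finset.mem_of_mem_erase h2))
  have hd24 : ∀ v : Fin (t*(k-1)+1), v ∈ B' → v ∈ W \ B' → False := by
    intro v h1 h2
    exact (Finset.mem_sdiff.1 h2).2 h1
  have hd34 : ∀ v : Fin (t*(k-1)+1), v ∈ S₂.erase x → v ∈ W \ B' → False := by
    intro v h1 h2
    have h3 := (Finset.mem_sdiff.1 h2).1
    rw [hWdef, Finset.mem_sdiff, Finset.mem_union] at h3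
    exact h3.2 (Or.inr (Finset.mem_of_mem_erase h1))
  have hinj : ∀ m₁, m₁ < t*(k-1) → ∀ m₂, m₂ < t*(k-1) → f m₁ = f m₂ → m₁ = m₂ := by
    intro m₁ hm₁ m₂ hm₂ heq
    simp only [hfdef] at heq
    split_ifs at heq with a1 b1 a2 b2 a3 b3 a4 b4 a5 b5 a6 b6 a7 b7 a8 b8
    all_goals first
    | (exact hg₁i _ (by omega) _ (by omega) heq)
    | (have := hg₂i _ (by omega) _ (by omega) heq; omega)
    | (have := hg₃i _ (by omega) _ (by omega) heq; omega)
    | (have := hg₄i _ (by omega) _ (by omega) heq; omega)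
    | (exfalso; exact hd12 _ (heq ▸ hg₁m _ (by omega)) (hg₂m _ (by omega)))
    | (exfalso; exact hd12 _ (hg₁m _ (by omega)) (heq ▸ hg₂m _ (by omega)))
    | (exfalso; exact hd13 _ (heq ▸ hg₁m _ (by omega)) (hg₃m _ (by omega)))
    | (exfalso; exact hd13 _ (hg₁m _ (by omega)) (heq ▸ hg₃m _ (by omega)))
    | (exfalso; exact hd14 _ (heq ▸ hg₁m _ (by omega)) (hg₄m _ (by omega)))
    | (exfalso; exact hd14 _ (hg₁m _ (by omega)) (heq ▸ hg₄m _ (by omega)))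
    | (exfalso; exact hd23 _ (heq ▸ hg₂m _ (by omega)) (hg₃m _ (by omega)))
    | (exfalso; exact hd23 _ (hg₂m _ (by omega)) (heq ▸ hg₃m _ (by omega)))
    | (exfalso; exact hd24 _ (heq ▸ hg₂m _ (by omega)) (hg₄m _ (by omega)))
    | (exfalso; exact hd24 _ (hg₂m _ (by omega)) (heq ▸ hg₄m _ (by omega)))
    | (exfalso; exact hd34 _ (heq ▸ hg₃m _ (by omega)) (hg₄m _ (by omega)))
    | (exfalso; exact hd34 _ (hg₃m _ (by omega)) (heq ▸ hg₄m _ (by omega)))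
  have hInjOn : Set.InjOn f (Set.Iio (t*(k-1))) := by
    intro m₁ hm₁ m₂ hm₂ h
    exact hinj m₁ (Set.mem_Iio.1 hm₁) m₂ (Set.mem_Iio.1 hm₂) h
  have hnotS2low : ∀ m, m ≤ 2*(k-1) → f m ∉ S₂ := by
    intro m hm hmem
    simp only [hfdef] at hmem
    split_ifs at hmem with a1 b1 c1
    all_goals first
    | omega
    | (have h1 := Finset.mem_erase.1 (hg₁m m (by omega))
       have h3 : g₁ m ∈ S₁ ∩ S₂ := Finset.mem_inter.2 ⟨h1.2, hmem⟩
       rw [hxx, Finset.mem_singleton] at h3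
       exact h1.1 h3)
    | (have h2 := hB'W (hg₂m (m - ((k-1)+1)) (by omega))
       rw [hWdef, Finset.mem_sdiff, Finset.mem_union] at h2
       exact h2.2 (Or.inr hmem))
  have hnotS1high : ∀ m, 2*(k-1) ≤ m → m < t*(k-1) → f m ∉ S₁ := by
    intro m hm hmM hmem
    simp only [hfdef] at hmem
    split_ifs at hmem with a1 b1 c1
    all_goals first
    | omega
    | (have h2 := hB'W (hg₂m (m - ((k-1)+1)) (by omega))
       rw [hWdef, Finset.mem_sdiff, Finset.mem_union] at h2
       exact h2.2 (Or.inl hmem))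
    | (have h1 := Finset.mem_erase.1 (hg₃m (m - (2*(k-1)+1)) (by omega))
       have h3 : g₃ (m - (2*(k-1)+1)) ∈ S₁ ∩ S₂ := Finset.mem_inter.2 ⟨hmem, h1.2⟩
       rw [hxx, Finset.mem_singleton] at h3
       exact h1.1 h3)
    | (have h2 := (Finset.mem_sdiff.1 (hg₄m (m - (3*(k-1)+2)) (by omega))).1
       rw [hWdef, Finset.mem_sdiff, Finset.mem_union] at h2
       exact h2.2 (Or.inl hmem))
  have hnotS2high : ∀ m, 3*(k-1)+2 ≤ m → m < t*(k-1) → f m ∉ S₂ := by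
    intro m hm hmM hmem
    simp only [hfdef] at hmem
    split_ifs at hmem with a1 b1 c1
    all_goals first
    | omega
    | (have h2 := (Finset.mem_sdiff.1 (hg₄m (m - (3*(k-1)+2)) (by omega))).1
       rw [hWdef, Finset.mem_sdiff, Finset.mem_union] at h2
       exact h2.2 (Or.inr hmem))
  have hkM : k ≤ t*(k-1) := by omega
  refine ⟨f, hInjOn, ?_⟩
  intro i hi
  have hcard : (cycleEdge k t f i).card = k := cycleEdge_card k t (by omega) hkM f hInjOn i
  have hmem : ∀ v ∈ cycleEdge k t f i, ∃ j, j < k ∧ v = f ((i*(k-1) + j) % (t*(k-1))) := by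
    intro v hv
    rw [cycleEdge] at hv
    obtain ⟨j, hj, rfl⟩ := Finset.mem_image.1 hv
    exact ⟨j, Finset.mem_range.1 hj, rfl⟩
  rcases Nat.lt_or_ge i 2 with hi2 | hi2
  · apply hred₂ _ hcard
    rw [Finset.disjoint_left]
    intro v hv
    obtain ⟨j, hj, rfl⟩ := hmem v hv
    have hiK : i * (k-1) ≤ 1 * (k-1) := Nat.mul_le_mul_right _ (by omega)
    have hidx : (i*(k-1) + j) % (t*(k-1)) = i*(k-1) + j := Nat.mod_eq_of_lt (by omega)
    rw [hidx]
    exact hnotS2low _ (by omega)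
  · rcases Nat.lt_or_ge i (t-1) with hit | hit
    · apply hred₁ _ hcard
      rw [Finset.disjoint_left]
      intro v hv
      obtain ⟨j, hj, rfl⟩ := hmem v hv
      have hiK : i * (k-1) ≤ (t-2) * (k-1) := Nat.mul_le_mul_right _ (by omega)
      have hiK2 : 2 * (k-1) ≤ i * (k-1) := Nat.mul_le_mul_right _ hi2
      have hidx : (i*(k-1) + j) % (t*(k-1)) = i*(k-1) + j := Nat.mod_eq_of_lt (by omega)
      rw [hidx]
      exact hnotS1high _ (by omega) (by omega)
    · have hieq : i = t - 1 := by omega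
      apply hred₂ _ hcard
      rw [Finset.disjoint_left]
      intro v hv
      obtain ⟨j, hj, rfl⟩ := hmem v hv
      rw [hieq]
      rcases Nat.lt_or_ge j (k-1) with hjK | hjK
      · have hidx : ((t-1)*(k-1) + j) % (t*(k-1)) = (t-1)*(k-1) + j :=
          Nat.mod_eq_of_lt (by omega)
        rw [hidx]
        exact hnotS2high _ (by omega) (by omega)
      · have hjeq : j = k-1 := by omega
        have hidx : ((t-1)*(k-1) + j) % (t*(k-1)) = 0 := by
          rw [hjeq, hPK]
          exact Nat.mod_self _
        rw [hidx]
        exact hnotS2low 0 (by omega)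

/-- `T` is a bichromatic (k+1)-set -/
def Bi (k : ℕ) {N : ℕ} (col : Finset (Fin N) → Bool) (T : Finset (Fin N)) : Prop :=
  T.card = k + 1 ∧ (∃ s ⊆ T, s.card = k ∧ col s = true) ∧ (∃ s ⊆ T, s.card = k ∧ col s = false)

section Main
variable {N k : ℕ}

lemma mono_of_noBi (hk : 1 ≤ k) (col : Finset (Fin N) → Bool) (U : Finset (Fin N))
    (hnoBi : ∀ T ⊆ U, T.card = k+1 → ¬ Bi k col T) :
    ∀ e₁ ⊆ U, ∀ e₂ ⊆ U, e₁.card = k → e₂.card = k → col e₁ = col e₂ := by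
  apply johnson hk
  intro T hTU hTcard s₁ hs₁ s₂ hs₂ hc₁ hc₂
  by_contra hne
  apply hnoBi T hTU hTcard
  refine ⟨hTcard, ?_, ?_⟩
  · cases h : col s₁ with
    | true => exact ⟨s₁, hs₁, hc₁, h⟩
    | false =>
      refine ⟨s₂, hs₂, hc₂, ?_⟩
      cases h2 : col s₂ with
      | true => rfl
      | false => exact absurd (by rw [h, h2]) hne
  · cases h : col s₁ with
    | false => exact ⟨s₁, hs₁, hc₁, h⟩
    | true =>
      refine ⟨s₂, hs₂, hc₂, ?_⟩
      cases h2 : col s₂ with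
      | false => rfl
      | true => exact absurd (by rw [h, h2]) hne

variable {t : ℕ}

/-- key arithmetic -/
lemma arith1 (hk : 3 ≤ k) (ht : 5 ≤ t) : 3 * (k-1) + (k+1) ≤ t * (k-1) + 1 := by
  have := Nat.mul_le_mul_right (k-1) ht
  omega

/-- complement of a bichromatic set is a red clique -/
lemma L4 (hk : 3 ≤ k) (ht : 5 ≤ t) (col : Finset (Fin (t*(k-1)+1)) → Bool)
    (hnoblue : ¬ hasCycle k 3 col false)
    (H3 : ∀ T₁ T₂ : Finset (Fin (t*(k-1)+1)), Bi k col T₁ → Bi k col T₂ → ¬ Disjoint T₁ T₂)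
    (B : Finset (Fin (t*(k-1)+1))) (hB : Bi k col B) :
    ∀ e : Finset (Fin (t*(k-1)+1)), e.card = k → Disjoint e B → col e = true := by
  set U : Finset (Fin (t*(k-1)+1)) := univ \ B with hUdef
  have hBcard : B.card = k + 1 := hB.1
  have hUcard : U.card = t*(k-1)+1 - (k+1) := by
    rw [hUdef, Finset.card_sdiff_of_subset (Finset.subset_univ B), Finset.card_univ, Fintype.card_fin, hBcard]
  have hnoBi : ∀ T ⊆ U, T.card = k+1 → ¬ Bi k col T := by
    intro T hTU _ hBiT
    exact H3 T B hBiT hB (Finset.disjoint_left.2 fun a haT haB => by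
      have := hTU haT
      rw [hUdef, Finset.mem_sdiff] at this
      exact this.2 haB)
  have hmono := mono_of_noBi (by omega) col U hnoBi
  have hUk : k ≤ U.card := by
    rw [hUcard]
    have := arith1 hk ht
    omega
  obtain ⟨e₀, he₀U, he₀⟩ := Finset.exists_subset_card_eq hUk
  have hcl : ∀ b : Bool, col e₀ = b → ∀ e ⊆ U, e.card = k → col e = b := by
    intro b hb e heU hec
    rw [← hb]
    exact hmono e heU e₀ he₀U hec he₀
  cases h : col e₀ with
  | false =>
    exfalso
    apply hnoblue
    apply clique_cycle hk (le_refl 3) col false U _ (hcl false h)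
    rw [hUcard]
    have := arith1 hk ht
    omega
  | true =>
    intro e hec hdisj
    apply hcl true h e _ hec
    rw [hUdef]
    intro a ha
    rw [Finset.mem_sdiff]
    exact ⟨Finset.mem_univ a, Finset.disjoint_left.1 hdisj ha⟩

/-- any two blue edges intersect -/
lemma blue_inter (hk : 3 ≤ k) (ht : 5 ≤ t) (col : Finset (Fin (t*(k-1)+1)) → Bool)
    (hnoblue : ¬ hasCycle k 3 col false)
    (H3 : ∀ T₁ T₂ : Finset (Fin (t*(k-1)+1)), Bi k col T₁ → Bi k col T₂ → ¬ Disjoint T₁ T₂)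
    (b₁ b₂ : Finset (Fin (t*(k-1)+1))) (hc₁ : b₁.card = k) (hc₂ : b₂.card = k)
    (hb₁ : col b₁ = false) (hb₂ : col b₂ = false) : ¬ Disjoint b₁ b₂ := by
  intro hdisj
  set U : Finset (Fin (t*(k-1)+1)) := univ \ b₂ with hUdef
  have hUcard : U.card = t*(k-1)+1 - k := by
    rw [hUdef, Finset.card_sdiff_of_subset (Finset.subset_univ b₂), Finset.card_univ, Fintype.card_fin, hc₂]
  have hnoBi : ∀ T ⊆ U, T.card = k+1 → ¬ Bi k col T := by
    intro T hTU _ hBiT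
    have := L4 hk ht col hnoblue H3 T hBiT b₂ hc₂ (Finset.disjoint_left.2 fun a hab hat => by
      have := hTU hat
      rw [hUdef, Finset.mem_sdiff] at this
      exact this.2 hab)
    rw [hb₂] at this
    exact Bool.false_ne_true this
  have hmono := mono_of_noBi (by omega : 1 ≤ k) col U hnoBi
  have hb₁U : b₁ ⊆ U := by
    rw [hUdef]
    intro a ha
    rw [Finset.mem_sdiff]
    exact ⟨Finset.mem_univ a, Finset.disjoint_left.1 hdisj ha⟩
  apply hnoblue
  apply clique_cycle hk (le_refl 3) col false U
  · rw [hUcard]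
    have := arith1 hk ht
    omega
  · intro e heU hec
    rw [← hb₁]
    exact hmono e heU b₁ hb₁U hec hc₁
end Main

/-- any two distinct blue edges meet in at least 2 vertices -/
lemma blue_pair_ge2 {k t : ℕ} (hk : 3 ≤ k) (ht : 5 ≤ t)
    (col : Finset (Fin (t*(k-1)+1)) → Bool)
    (hnored : ¬ hasCycle k t col true)
    (hnoblue : ¬ hasCycle k 3 col false)
    (H3 : ∀ T₁ T₂ : Finset (Fin (t*(k-1)+1)), Bi k col T₁ → Bi k col T₂ → ¬ Disjoint T₁ T₂)
    (b₁ b₂ : Finset (Fin (t*(k-1)+1))) (hc₁ : b₁.card = k) (hc₂ : b₂.card = k)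
    (hb₁ : col b₁ = false) (hb₂ : col b₂ = false) (hne : b₁ ≠ b₂) :
    2 ≤ (b₁ ∩ b₂).card := by
  have hM5 : 5 * (k-1) ≤ t * (k-1) := Nat.mul_le_mul_right _ ht
  have hnd := blue_inter hk ht col hnoblue H3 b₁ b₂ hc₁ hc₂ hb₁ hb₂
  have h1 : 1 ≤ (b₁ ∩ b₂).card := by
    rw [Nat.one_le_iff_ne_zero]
    intro h0
    exact hnd (Finset.disjoint_iff_inter_eq_empty.2 (Finset.card_eq_zero.1 h0))
  rcases Nat.lt_or_ge ((b₁ ∩ b₂).card) 2 with hlt | hge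
  · exfalso
    have hone : (b₁ ∩ b₂).card = 1 := by omega
    obtain ⟨x, hxx⟩ := Finset.card_eq_one.1 hone
    -- pick α ≠ β outside b₁ ∪ b₂
    have hUcard : (Finset.univ \ (b₁ ∪ b₂)).card = t*(k-1)+1 - (2*k-1) := by
      rw [Finset.card_sdiff_of_subset (Finset.subset_univ _), Finset.card_univ, Fintype.card_fin]
      have h := Finset.card_union_add_card_inter b₁ b₂
      rw [hc₁, hc₂, hxx, Finset.card_singleton] at h
      omega
    have h2lt : 1 < (Finset.univ \ (b₁ ∪ b₂)).card := by rw [hUcard]; omega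
    obtain ⟨α, hα, β, hβ, hαβ⟩ := Finset.one_lt_card.1 h2lt
    rw [Finset.mem_sdiff, Finset.mem_union] at hα hβ
    have hαb₁ : α ∉ b₁ := fun h => hα.2 (Or.inl h)
    have hαb₂ : α ∉ b₂ := fun h => hα.2 (Or.inr h)
    have hβb₁ : β ∉ b₁ := fun h => hβ.2 (Or.inl h)
    have hβb₂ : β ∉ b₂ := fun h => hβ.2 (Or.inr h)
    have hxb₁ : x ∈ b₁ := Finset.mem_inter.1 (hxx ▸ Finset.mem_singleton_self x) |>.1
    have hxb₂ : x ∈ b₂ := Finset.mem_inter.1 (hxx ▸ Finset.mem_singleton_self x) |>.2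
    -- B₁ bichromatic
    have hBi : ∀ (a : Fin (t*(k-1)+1)) (b c : Finset (Fin (t*(k-1)+1))),
        a ∉ b → a ∉ c → b.card = k → c.card = k → col b = false → col c = false →
        b ∩ c = {x} → Bi k col (insert a b) := by
      intro a b c hab hac hbk hck hbf hcf hbc
      have hxb : x ∈ b := Finset.mem_inter.1 (hbc ▸ Finset.mem_singleton_self x) |>.1
      have hcard : (insert a b).card = k + 1 := by
        rw [Finset.card_insert_of_notMem hab, hbk]
      refine ⟨hcard, ?_, ⟨b, Finset.subset_insert _ _, hbk, hbf⟩⟩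
      set s₀ : Finset (Fin (t*(k-1)+1)) := insert a (b.erase x) with hs₀
      have hs₀sub : s₀ ⊆ insert a b := by
        rw [hs₀]
        exact Finset.insert_subset_insert _ (Finset.erase_subset _ _)
      have hs₀card : s₀.card = k := by
        rw [hs₀, Finset.card_insert_of_notMem (fun h => hab (Finset.mem_of_mem_erase h)),
          Finset.card_erase_of_mem hxb, hbk]
        omega
      cases hcol : col s₀ with
      | true => exact ⟨s₀, hs₀sub, hs₀card, hcol⟩
      | false =>
        exfalso
        apply blue_inter hk ht col hnoblue H3 s₀ c hs₀card hck hcol hcf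
        rw [Finset.disjoint_left]
        intro v hv
        rw [hs₀, Finset.mem_insert] at hv
        rcases hv with rfl | hv
        · exact hac
        · intro hvc
          have : v ∈ b ∩ c := Finset.mem_inter.2 ⟨Finset.mem_of_mem_erase hv, hvc⟩
          rw [hbc, Finset.mem_singleton] at this
          exact (Finset.ne_of_mem_erase hv) this
    have hBi₁ : Bi k col (insert α b₁) := hBi α b₁ b₂ hαb₁ hαb₂ hc₁ hc₂ hb₁ hb₂ hxx
    have hBi₂ : Bi k col (insert β b₂) := hBi β b₂ b₁ hβb₂ hβb₁ hc₂ hc₁ hb₂ hb₁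
      (by rw [Finset.inter_comm]; exact hxx)
    apply hnored
    apply two_clique_cycle hk ht col (insert α b₁) (insert β b₂) x
      (by rw [Finset.card_insert_of_notMem hαb₁, hc₁])
      (by rw [Finset.card_insert_of_notMem hβb₂, hc₂])
      ?_
      (L4 hk ht col hnoblue H3 _ hBi₁)
      (L4 hk ht col hnoblue H3 _ hBi₂)
    ext v
    rw [Finset.mem_inter, Finset.mem_insert, Finset.mem_insert, Finset.mem_singleton]
    constructor
    · rintro ⟨h1 | h1, h2 | h2⟩
      · exact absurd (h1.symm.trans h2) hαβ
      · exact absurd (h1 ▸ h2) hαb₂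
      · exact absurd (h2 ▸ h1) hβb₁
      · have : v ∈ b₁ ∩ b₂ := Finset.mem_inter.2 ⟨h1, h2⟩
        rw [hxx, Finset.mem_singleton] at this
        exact this
    · rintro rfl
      exact ⟨Or.inr hxb₁, Or.inr hxb₂⟩
  · exact hge

lemma machine {k t : ℕ} (hk : 3 ≤ k) (ht : 5 ≤ t)
    (col : Finset (Fin (t*(k-1)+1)) → Bool)
    (hnored : ¬ hasCycle k t col true)
    (hpair : ∀ b₁ b₂ : Finset (Fin (t*(k-1)+1)), b₁.card = k → b₂.card = k →
      col b₁ = false → col b₂ = false → b₁ ≠ b₂ → 2 ≤ (b₁ ∩ b₂).card) : False := by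
  have hM5 := Nat.mul_le_mul_right (k-1) ht
  have hkM : k ≤ t*(k-1) := by omega
  have hMpos : 0 < t*(k-1) := by omega
  have hsub1 : (t-1)*(k-1) + (k-1) = t*(k-1) := by
    have e1 : (t-1)*(k-1) + (k-1) = (t-1+1)*(k-1) := by ring
    rw [e1, Nat.sub_add_cancel (by omega)]
  have hpset_lt : ∀ i : ℕ, ∀ r ∈ pset k t i, r < t*(k-1) := by
    intro i r hr
    rw [pset, Finset.mem_image] at hr
    obtain ⟨j, _, rfl⟩ := hr
    exact Nat.mod_lt _ hMpos
  have main : ∀ c : ℕ, ∀ (e : Finset (Fin (t*(k-1)+1))) (f : ℕ → Fin (t*(k-1)+1)),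
      e.card = k → col e = false →
      Set.InjOn f (Set.Iio (t*(k-1))) →
      col (cycleEdge k t f 0) = false →
      (e ∩ cycleEdge k t f 0).card = c → False := by
    intro c
    induction c using Nat.strong_induction_on with
    | _ c IH =>
    intro e f he hce hinj hblue hcap
    have he₀card : (cycleEdge k t f 0).card = k := cycleEdge_card k t (by omega) hkM f hinj 0
    by_cases hsmall : c ≤ 1
    · by_cases heq : e = cycleEdge k t f 0
      · rw [heq, Finset.inter_self, he₀card] at hcap
        omega
      · have := hpair e _ he he₀card hce hblue heq
        omega
    · push_neg at hsmall
      have hne : (e ∩ cycleEdge k t f 0).Nonempty := by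
        rw [← Finset.card_pos, hcap]; omega
      obtain ⟨v, hv⟩ := hne
      have hv0 := (Finset.mem_inter.1 hv).2
      rw [cycleEdge_eq_image, pset_zero hk ht, Finset.mem_image] at hv0
      obtain ⟨p, hpk, hpv⟩ := hv0
      rw [Finset.mem_range] at hpk
      have hpM : p < t*(k-1) := by omega
      have hfpe : f p ∈ e := by rw [hpv]; exact (Finset.mem_inter.1 hv).1
      have hfpe₀ : f p ∈ cycleEdge k t f 0 := by
        rw [cycleEdge_eq_image, pset_zero hk ht]
        exact Finset.mem_image.2 ⟨p, Finset.mem_range.2 hpk, rfl⟩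
      set Q : Finset ℕ := Finset.Icc (2*(k-1)+1) ((t-1)*(k-1)-1) with hQdef
      have hQcard : Q.card = (t-1)*(k-1)-1 + 1 - (2*(k-1)+1) := Nat.card_Icc _ _
      have hQM : ∀ q ∈ Q, q < t*(k-1) := by
        intro q hqQ; rw [hQdef, Finset.mem_Icc] at hqQ; omega
      have hexq : ∃ q ∈ Q, f q ∉ e := by
        by_contra hall
        push_neg at hall
        have hsubQ : Q.image f ⊆ e \ cycleEdge k t f 0 := by
          intro w hw
          obtain ⟨q, hqQ, rfl⟩ := Finset.mem_image.1 hw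
          rw [Finset.mem_sdiff]
          refine ⟨hall q hqQ, ?_⟩
          intro hmem
          rw [cycleEdge_eq_image, pset_zero hk ht, Finset.mem_image] at hmem
          obtain ⟨r, hrk, hrv⟩ := hmem
          rw [Finset.mem_range] at hrk
          have hrq : r = q := hinj (Set.mem_Iio.2 (by omega)) (Set.mem_Iio.2 (hQM q hqQ)) hrv
          rw [hQdef, Finset.mem_Icc] at hqQ
          omega
        have hQicard : (Q.image f).card = Q.card := Finset.card_image_of_injOn (by
          intro q₁ h₁ q₂ h₂ hh
          exact hinj (Set.mem_Iio.2 (hQM _ h₁)) (Set.mem_Iio.2 (hQM _ h₂)) hh)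
        have hsd : (e \ cycleEdge k t f 0).card + (e ∩ cycleEdge k t f 0).card = e.card :=
          Finset.card_sdiff_add_card_inter e _
        have hle := Finset.card_le_card hsubQ
        rw [hQicard, hQcard] at hle
        omega
      obtain ⟨q, hqQ, hfqe⟩ := hexq
      rw [hQdef, Finset.mem_Icc] at hqQ
      have hqM : q < t*(k-1) := by omega
      have hqp0 : q ∉ pset k t 0 := by
        rw [pset_zero hk ht, Finset.mem_range]; omega
      have hpq : p ≠ q := by omega
      set f' := swapf f p q with hf'def
      have hinj' : Set.InjOn f' (Set.Iio (t*(k-1))) := swapf_injOn hinj hpM hqM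
      have hp0 : p ∈ pset k t 0 := by rw [pset_zero hk ht, Finset.mem_range]; omega
      have hwin0 : cycleEdge k t f' 0 = insert (f q) ((cycleEdge k t f 0).erase (f p)) := by
        rw [cycleEdge_eq_image, cycleEdge_eq_image]
        exact image_swapf hinj (hpset_lt 0) hp0 hqp0 hqM
      have hfqe₀ : f q ∉ cycleEdge k t f 0 := by
        intro hmem
        rw [cycleEdge_eq_image, pset_zero hk ht, Finset.mem_image] at hmem
        obtain ⟨r, hrk, hrv⟩ := hmem
        rw [Finset.mem_range] at hrk
        have : r = q := hinj (Set.mem_Iio.2 (by omega)) (Set.mem_Iio.2 hqM) hrv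
        omega
      have hcap' : (e ∩ cycleEdge k t f' 0).card = c - 1 := by
        have hseteq : e ∩ cycleEdge k t f' 0 = (e ∩ cycleEdge k t f 0).erase (f p) := by
          rw [hwin0]
          ext w
          simp only [Finset.mem_inter, Finset.mem_insert, Finset.mem_erase]
          constructor
          · rintro ⟨hwe, rfl | ⟨hwp, hw0⟩⟩
            · exact absurd hwe hfqe
            · exact ⟨hwp, hwe, hw0⟩
          · rintro ⟨hwp, hwe, hw0⟩
            exact ⟨hwe, Or.inr ⟨hwp, hw0⟩⟩
        rw [hseteq, Finset.card_erase_of_mem (Finset.mem_inter.2 ⟨hfpe, hfpe₀⟩), hcap]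
      cases hcol' : col (cycleEdge k t f' 0) with
      | false => exact IH (c-1) (by omega) e f' he hce hinj' hcol' hcap'
      | true =>
        apply hnored
        refine ⟨f', hinj', ?_⟩
        intro i hi
        by_cases hi0 : i = 0
        · rw [hi0]; exact hcol'
        · have hwindcard : (cycleEdge k t f' i).card = k :=
            cycleEdge_card k t (by omega) hkM f' hinj' i
          have hkey : ∀ w₁ ∈ cycleEdge k t f' i ∩ cycleEdge k t f 0,
              ∀ w₂ ∈ cycleEdge k t f' i ∩ cycleEdge k t f 0, w₁ = w₂ := by
            intro w₁ hw₁ w₂ hw₂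
            by_cases hqmem : q ∈ pset k t i
            · have hempty := pset_inter_empty hk ht hi hqQ.1 hqQ.2 hqmem
              have hpnot : p ∉ pset k t i := fun hmem => hempty p hmem hp0
              have himg : cycleEdge k t f' i = insert (f p) (((pset k t i).image f).erase (f q)) := by
                rw [cycleEdge_eq_image, hf'def, swapf_comm f hpq]
                exact image_swapf hinj (hpset_lt i) hqmem hpnot hpM
              have hallfp : ∀ w ∈ cycleEdge k t f' i ∩ cycleEdge k t f 0, w = f p := by
                intro w hw
                obtain ⟨hwi, hw0⟩ := Finset.mem_inter.1 hw
                rw [himg, Finset.mem_insert, Finset.mem_erase] at hwi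
                rcases hwi with rfl | ⟨hwq, hwim⟩
                · rfl
                · exfalso
                  obtain ⟨r, hr, hrv⟩ := Finset.mem_image.1 hwim
                  rw [cycleEdge_eq_image, Finset.mem_image] at hw0
                  obtain ⟨r', hr', hrv'⟩ := hw0
                  have hrr : r = r' := hinj (Set.mem_Iio.2 (hpset_lt i r hr))
                    (Set.mem_Iio.2 (hpset_lt 0 r' hr')) (by rw [hrv, hrv'])
                  exact hempty r' (hrr ▸ hr) hr'
              rw [hallfp w₁ hw₁, hallfp w₂ hw₂]
            · have hmemr : ∀ w ∈ cycleEdge k t f' i ∩ cycleEdge k t f 0,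
                  ∃ r, r ∈ pset k t i ∧ r ∈ pset k t 0 ∧ w = f r := by
                intro w hw
                obtain ⟨hwi, hw0⟩ := Finset.mem_inter.1 hw
                have hwim : w ∈ (pset k t i).image f := by
                  by_cases hpmem : p ∈ pset k t i
                  · have himg : cycleEdge k t f' i
                        = insert (f q) (((pset k t i).image f).erase (f p)) := by
                      rw [cycleEdge_eq_image, hf'def]
                      exact image_swapf hinj (hpset_lt i) hpmem hqmem hqM
                    rw [himg, Finset.mem_insert, Finset.mem_erase] at hwi
                    rcases hwi with rfl | ⟨hwp, hwim⟩
                    · exact absurd hw0 hfqe₀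
                    · exact hwim
                  · have himg : cycleEdge k t f' i = (pset k t i).image f := by
                      rw [cycleEdge_eq_image, hf'def]
                      exact image_swapf_of_notMem hpmem hqmem
                    rw [himg] at hwi
                    exact hwi
                obtain ⟨r, hr, hrv⟩ := Finset.mem_image.1 hwim
                rw [cycleEdge_eq_image, Finset.mem_image] at hw0
                obtain ⟨r', hr', hrv'⟩ := hw0
                have hrr : r = r' := hinj (Set.mem_Iio.2 (hpset_lt i r hr))
                  (Set.mem_Iio.2 (hpset_lt 0 r' hr')) (by rw [hrv, hrv'])
                exact ⟨r, hr, hrr ▸ hr', hrv.symm⟩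
              obtain ⟨r₁, ha, hb, rfl⟩ := hmemr w₁ hw₁
              obtain ⟨r₂, hc, hd, rfl⟩ := hmemr w₂ hw₂
              rw [pset_inter_subsingleton hk ht hi hi0 r₁ ha hb r₂ hc hd]
          have hint_le : (cycleEdge k t f' i ∩ cycleEdge k t f 0).card ≤ 1 :=
            Finset.card_le_one.2 (fun a ha b hb => hkey a ha b hb)
          cases hcoli : col (cycleEdge k t f' i) with
          | true => rfl
          | false =>
            exfalso
            have hnei : cycleEdge k t f' i ≠ cycleEdge k t f 0 := by
              intro hcontr
              rw [hcontr, Finset.inter_self, he₀card] at hint_le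
              omega
            have := hpair _ _ hwindcard he₀card hcoli hblue hnei
            omega
  -- start
  obtain ⟨g, hgm, hgi⟩ := exists_enum (t*(k-1)) (Finset.univ : Finset (Fin (t*(k-1)+1)))
      (by rw [Finset.card_univ, Fintype.card_fin]; omega) ⟨0, by omega⟩
  have hginj : Set.InjOn g (Set.Iio (t*(k-1))) := fun m₁ h₁ m₂ h₂ h => hgi m₁ h₁ m₂ h₂ h
  by_cases hall : ∀ i < t, col (cycleEdge k t g i) = true
  · exact hnored ⟨g, hginj, hall⟩
  · push_neg at hall
    obtain ⟨i₀, hi₀t, hi₀⟩ := hall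
    have hi₀f : col (cycleEdge k t g i₀) = false := by
      cases h : col (cycleEdge k t g i₀) with
      | false => rfl
      | true => exact absurd h hi₀
    set f₁ : ℕ → Fin (t*(k-1)+1) := fun m => g ((m + i₀*(k-1)) % (t*(k-1))) with hf₁def
    have hinj₁ : Set.InjOn f₁ (Set.Iio (t*(k-1))) := by
      intro m₁ hm₁ m₂ hm₂ h
      simp only [hf₁def] at h
      have h₁ : (m₁ + i₀*(k-1)) % (t*(k-1)) < t*(k-1) := Nat.mod_lt _ hMpos
      have h₂ : (m₂ + i₀*(k-1)) % (t*(k-1)) < t*(k-1) := Nat.mod_lt _ hMpos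
      have heq := hginj (Set.mem_Iio.2 h₁) (Set.mem_Iio.2 h₂) h
      have hm₁' : m₁ < t*(k-1) := hm₁
      have hm₂' : m₂ < t*(k-1) := hm₂
      rw [Nat.add_comm m₁, Nat.add_comm m₂] at heq
      exact idx_inj hm₁' hm₂' heq
    have hwem : cycleEdge k t f₁ 0 = cycleEdge k t g i₀ := by
      rw [cycleEdge, cycleEdge]
      apply Finset.image_congr
      intro j hj
      rw [Finset.mem_coe, Finset.mem_range] at hj
      simp only [hf₁def]
      rw [Nat.zero_mul, Nat.zero_add, Nat.mod_eq_of_lt (by omega : j < t*(k-1))]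
      congr 1
      rw [Nat.add_comm]
    have hcyc₁ : (cycleEdge k t f₁ 0).card = k := cycleEdge_card k t (by omega) hkM f₁ hinj₁ 0
    exact main k (cycleEdge k t f₁ 0) f₁ hcyc₁
      (by rw [hwem]; exact hi₀f) hinj₁ (by rw [hwem]; exact hi₀f)
      (by rw [Finset.inter_self]; exact hcyc₁)


lemma Bi_parts {N k : ℕ} (hk : 3 ≤ k) (col : Finset (Fin N) → Bool) (T : Finset (Fin N))
    (hT : Bi k col T) :
    ∃ sr sb : Finset (Fin N), sr.card = k ∧ sb.card = k ∧ col sr = true ∧ col sb = false ∧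
      (sr ∩ sb).card = k - 1 ∧ sr ∪ sb = T := by
  obtain ⟨hTc, ⟨sr, hsrT, hsrc, hsrcol⟩, ⟨sb, hsbT, hsbc, hsbcol⟩⟩ := hT
  have hne : sr ≠ sb := fun h => by
    rw [h, hsbcol] at hsrcol
    exact Bool.false_ne_true hsrcol
  have hcui : (sr ∪ sb).card + (sr ∩ sb).card = sr.card + sb.card :=
    Finset.card_union_add_card_inter sr sb
  have hsub : sr ∪ sb ⊆ T := Finset.union_subset hsrT hsbT
  have hle : (sr ∪ sb).card ≤ k+1 := hTc ▸ Finset.card_le_card hsub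
  have hint_le : (sr ∩ sb).card ≤ k - 1 := by
    by_contra hcon
    push_neg at hcon
    have h2 : sr ∩ sb = sr := Finset.eq_of_subset_of_card_le Finset.inter_subset_left (by omega)
    have h3 : sr ⊆ sb := by rw [← h2]; exact Finset.inter_subset_right
    exact hne (Finset.eq_of_subset_of_card_le h3 (by omega))
  have hint : (sr ∩ sb).card = k - 1 := by omega
  have hUT : sr ∪ sb = T := Finset.eq_of_subset_of_card_le hsub (by omega)
  exact ⟨sr, sb, hsrc, hsbc, hsrcol, hsbcol, hint, hUT⟩

theorem two_disjoint_intersecting_red_blue_pairs (k t : ℕ) (hk : 3 ≤ k) (ht : 5 ≤ t)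
    (col : Finset (Fin (t * (k - 1) + 1)) → Bool)
    (hnored : ¬ hasCycle k t col true)
    (hnoblue : ¬ hasCycle k 3 col false) :
    ∃ e₁ e₂ f₁ f₂ : Finset (Fin (t * (k - 1) + 1)),
      e₁.card = k ∧ e₂.card = k ∧ f₁.card = k ∧ f₂.card = k ∧
      col e₁ = true ∧ col e₂ = false ∧ col f₁ = true ∧ col f₂ = false ∧
      (e₁ ∩ e₂).card = k - 1 ∧ (f₁ ∩ f₂).card = k - 1 ∧
      (e₁ ∪ e₂) ∩ (f₁ ∪ f₂) = ∅ := by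
  by_contra hgoal
  have H3 : ∀ T₁ T₂ : Finset (Fin (t*(k-1)+1)), Bi k col T₁ → Bi k col T₂ → ¬ Disjoint T₁ T₂ := by
    intro T₁ T₂ h₁ h₂ hdisj
    obtain ⟨e₁, e₂, c1, c2, r1, b1, i1, u1⟩ := Bi_parts hk col T₁ h₁
    obtain ⟨f₁, f₂, c3, c4, r2, b2, i2, u2⟩ := Bi_parts hk col T₂ h₂
    exact hgoal ⟨e₁, e₂, f₁, f₂, c1, c2, c3, c4, r1, b1, r2, b2, i1, i2, by
      rw [u1, u2]
      exact Finset.disjoint_iff_inter_eq_empty.1 hdisj⟩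
  exact machine hk ht col hnored (blue_pair_ge2 hk ht col hnored hnoblue H3)
end
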